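/- arXiv:2502.16226 — 3 statements merged into one kernel-verified Lean document; each statement's English description precedes it below -/
import Mathlib

section
/- Let w : [c,∞) → ℝ be continuous, positive, and nondecreasing with ∫_c^∞ 1/w(s) ds = ∞, and define G(z) = ∫_c^z 1/w(s) ds for z ≥ c. Suppose y : [0,∞) → [c,∞) is continuous and satisfies y(t) ≤ c + ∫₀^t y(s)·w(y(s)) ds for all t ≥ 0. Then y(t) ≤ G⁻¹(∫₀^t y(s) ds) for all t ≥ 0, where G⁻¹ denotes the inverse of G (which is a strictly increasing bijection from [c,∞) onto [0,∞)). -/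
open MeasureTheory Filter Set

/-- Nonlinear Grönwall–Bihari inequality: if `y(t) ≤ c + ∫₀ᵗ y·w(y)` with `w`
continuous, positive, nondecreasing on `[c,∞)` and `G(z) = ∫_c^z 1/w(s) ds`
diverging at infinity (so that its inverse `Ginv` is defined on `[0,∞)`), then
`y(t) ≤ G⁻¹(∫₀ᵗ y(s) ds)`. -/
theorem bihari_gronwall (c : ℝ) (hc : 0 < c) (w : ℝ → ℝ)
    (hwcont : ContinuousOn w (Ici c))
    (hwpos : ∀ z ≥ c, 0 < w z)
    (hwmono : MonotoneOn w (Ici c))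
    (G : ℝ → ℝ) (hG : ∀ z, G z = ∫ s in c..z, (w s)⁻¹)
    (hGdiv : Tendsto G atTop atTop)
    (Ginv : ℝ → ℝ)
    (hGinv_left : ∀ z ≥ c, Ginv (G z) = z)
    (hGinv_right : ∀ x ≥ (0:ℝ), G (Ginv x) = x ∧ c ≤ Ginv x)
    (hGinvmono : StrictMonoOn Ginv (Ici (0:ℝ)))
    (y : ℝ → ℝ) (hyc : Continuous y) (hyge : ∀ t ≥ (0:ℝ), c ≤ y t)
    (hineq : ∀ t ≥ (0:ℝ), y t ≤ c + ∫ s in (0:ℝ)..t, y s * w (y s)) :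
    ∀ t ≥ (0:ℝ), y t ≤ Ginv (∫ s in (0:ℝ)..t, y s) := by
  -- extended versions of `w` and `y`
  set wt : ℝ → ℝ := fun z => w (max z c) with hwt_def
  set yt : ℝ → ℝ := fun s => y (max s 0) with hyt_def
  have hwt_cont : Continuous wt :=
    hwcont.comp_continuous (continuous_id.max continuous_const) fun z => le_max_right z c
  have hwt_pos : ∀ z, 0 < wt z := fun z => hwpos _ (le_max_right _ _)
  have hwt_mono : Monotone wt := fun a b hab =>
    hwmono (mem_Ici.mpr (le_max_right _ _)) (mem_Ici.mpr (le_max_right _ _)) (max_le_max hab le_rfl)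
  have hwt_eq : ∀ z ≥ c, wt z = w z := fun z hz => by
    simp only [hwt_def, max_eq_left hz]
  have hyt_cont : Continuous yt :=
    hyc.comp (continuous_id.max continuous_const)
  have hyt_ge : ∀ s, c ≤ yt s := fun s => hyge _ (le_max_right _ _)
  have hyt_eq : ∀ s ≥ (0:ℝ), yt s = y s := fun s hs => by
    simp only [hyt_def, max_eq_left hs]
  set f : ℝ → ℝ := fun s => yt s * wt (yt s) with hf_def
  have hf_cont : Continuous f := hyt_cont.mul (hwt_cont.comp hyt_cont)
  have hf_pos : ∀ s, 0 < f s := fun s =>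
    mul_pos (lt_of_lt_of_le hc (hyt_ge s)) (hwt_pos _)
  set V : ℝ → ℝ := fun t => c + ∫ s in (0:ℝ)..t, f s with hV_def
  have hV_deriv : ∀ t, HasDerivAt V (f t) t := fun t =>
    (intervalIntegral.integral_hasDerivAt_right
      (hf_cont.intervalIntegrable _ _)
      (hf_cont.aestronglyMeasurable.stronglyMeasurableAtFilter)
      hf_cont.continuousAt).const_add c
  have hV_ge : ∀ t ≥ (0:ℝ), c ≤ V t := by
    intro t ht
    have : 0 ≤ ∫ s in (0:ℝ)..t, f s :=
      intervalIntegral.integral_nonneg ht fun s _ => (hf_pos s).le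
    simp only [hV_def]; linarith
  -- `y ≤ V`
  have h_int_eq : ∀ t ≥ (0:ℝ), (∫ s in (0:ℝ)..t, y s * w (y s)) = ∫ s in (0:ℝ)..t, f s := by
    intro t ht
    refine intervalIntegral.integral_congr fun s hs => ?_
    rw [uIcc_of_le ht] at hs
    rw [hf_def]
    simp only [hyt_eq s hs.1, hwt_eq _ (hyge s hs.1)]
  have hy_le_V : ∀ t ≥ (0:ℝ), y t ≤ V t := fun t ht => by
    have := hineq t ht
    rw [h_int_eq t ht] at this
    exact this
  -- extended `G`
  set Gt : ℝ → ℝ := fun z => ∫ s in c..z, (wt s)⁻¹ with hGt_def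
  have hwti_cont : Continuous fun z => (wt z)⁻¹ :=
    hwt_cont.inv₀ fun z => (hwt_pos z).ne'
  have hGt_deriv : ∀ z, HasDerivAt Gt (wt z)⁻¹ z := fun z =>
    intervalIntegral.integral_hasDerivAt_right
      (hwti_cont.intervalIntegrable _ _)
      (hwti_cont.aestronglyMeasurable.stronglyMeasurableAtFilter)
      hwti_cont.continuousAt
  have hGt_eq : ∀ z ≥ c, Gt z = G z := by
    intro z hz
    rw [hG z, hGt_def]
    refine intervalIntegral.integral_congr fun s hs => ?_
    rw [uIcc_of_le hz] at hs
    rw [hwt_eq _ hs.1]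
  -- the comparison function
  set F : ℝ → ℝ := fun t => (∫ s in (0:ℝ)..t, yt s) - Gt (V t) with hF_def
  have hF_deriv : ∀ t, HasDerivAt F (yt t - (wt (V t))⁻¹ * f t) t := fun t =>
    HasDerivAt.sub
      (intervalIntegral.integral_hasDerivAt_right
        (hyt_cont.intervalIntegrable _ _)
        (hyt_cont.aestronglyMeasurable.stronglyMeasurableAtFilter)
        hyt_cont.continuousAt)
      ((hGt_deriv (V t)).comp t (hV_deriv t))
  have hF_mono : MonotoneOn F (Ici (0:ℝ)) := by
    refine monotoneOn_of_deriv_nonneg (convex_Ici 0)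
      (fun t _ => ((hF_deriv t).differentiableAt.continuousAt).continuousWithinAt)
      (fun t _ => ((hF_deriv t).differentiableAt).differentiableWithinAt) ?_
    intro t ht
    rw [interior_Ici] at ht
    rw [(hF_deriv t).deriv]
    have hty : yt t = y t := hyt_eq t ht.le
    have hyV : yt t ≤ V t := by rw [hty]; exact hy_le_V t ht.le
    have hwle : wt (yt t) ≤ wt (V t) := hwt_mono hyV
    have hy0 : 0 ≤ yt t := (hc.trans_le (hyt_ge t)).le
    have hwVpos : 0 < wt (V t) := hwt_pos _
    have : (wt (V t))⁻¹ * f t ≤ yt t := by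
      rw [hf_def]
      rw [inv_mul_le_iff₀ hwVpos]
      calc yt t * wt (yt t) ≤ yt t * wt (V t) := by nlinarith
        _ = wt (V t) * yt t := mul_comm _ _
    linarith
  -- conclude
  intro t ht
  have hF0 : F 0 = 0 := by
    simp only [hF_def, hV_def, hGt_def, intervalIntegral.integral_same, add_zero, sub_self,
      sub_zero]
  have hkey : Gt (V t) ≤ ∫ s in (0:ℝ)..t, yt s := by
    have h := hF_mono (self_mem_Ici) ht ht
    rw [hF0] at h
    simp only [hF_def] at h
    linarith
  have hyint : (∫ s in (0:ℝ)..t, yt s) = ∫ s in (0:ℝ)..t, y s := by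
    refine intervalIntegral.integral_congr fun s hs => ?_
    rw [uIcc_of_le ht] at hs
    exact hyt_eq s hs.1
  have hVt : c ≤ V t := hV_ge t ht
  have hGV : G (V t) ≤ ∫ s in (0:ℝ)..t, y s := by
    rw [← hGt_eq _ hVt, ← hyint]; exact hkey
  have hGV0 : 0 ≤ G (V t) := by
    rw [← hGt_eq _ hVt, hGt_def]
    exact intervalIntegral.integral_nonneg hVt fun s _ => (inv_pos.mpr (hwt_pos s)).le
  have hint0 : 0 ≤ ∫ s in (0:ℝ)..t, y s := by
    rw [← hyint]
    exact intervalIntegral.integral_nonneg ht fun s _ => (hc.trans_le (hyt_ge s)).le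
  calc y t ≤ V t := hy_le_V t ht
    _ = Ginv (G (V t)) := (hGinv_left _ hVt).symm
    _ ≤ Ginv (∫ s in (0:ℝ)..t, y s) :=
        hGinvmono.monotoneOn hGV0 hint0 hGV
end

section
/- Let 0 < a < b, Ω the annulus {a² < x²+y² < b²}, and let u : closure Ω → ℝ be C¹. Then for every p ∈ [1,∞) there is a constant C (depending only on a, b, p) such that ∫_Ω |u|^p dx dy ≤ C·(∫_{∂B(0,b)} |u|^p ds + ∫_Ω |∇u|^p dx dy), where the boundary integral is over the outer circle of radius b with respect to arc length. -/
open MeasureTheory Set Real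

open Filter Topology intervalIntegral



/-- Bound on `fderiv` on an open set from `C¹` on its closure. -/
lemma aux_fderiv_bound {u : ℝ × ℝ → ℝ} {A : Set (ℝ × ℝ)} (hA : IsOpen A)
    (hK : IsCompact (closure A)) (hu : ContDiffOn ℝ 1 u (closure A)) :
    ∃ M : ℝ, 0 ≤ M ∧ ∀ q ∈ A, ‖fderiv ℝ u q‖ ≤ M := by
  set K := closure A with hKdef
  have hloc : ∀ x ∈ K, ∃ O : Set (ℝ × ℝ), IsOpen O ∧ x ∈ O ∧ ∃ c : ℝ,
      ∀ y ∈ O ∩ A, ‖fderiv ℝ u y‖ ≤ c := by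
    intro x hx
    have h1 : ContDiffWithinAt ℝ (0 + 1) u K x := by
      simpa using hu x hx
    rcases (contDiffWithinAt_succ_iff_hasFDerivWithinAt (by simp)).1 h1 with
      ⟨v, hv, -, f', hf'd, hf'c⟩
    rw [insert_eq_self.2 hx] at hv
    rcases mem_nhdsWithin.1 hv with ⟨w, hw, hxw, hwv⟩
    have hcont : ContinuousWithinAt f' v x := hf'c.continuousWithinAt
    have hev : ∀ᶠ y in 𝓝[v] x, ‖f' y‖ < ‖f' x‖ + 1 := by
      have := hcont.norm
      exact this.eventually_lt tendsto_const_nhds (by linarith)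
    rcases mem_nhdsWithin.1 hev with ⟨w', hw', hxw', hw'v⟩
    refine ⟨w ∩ w', hw.inter hw', ⟨hxw, hxw'⟩, ‖f' x‖ + 1, ?_⟩
    rintro y ⟨⟨hyw, hyw'⟩, hyA⟩
    have hyv : y ∈ v := hwv ⟨hyw, subset_closure hyA⟩
    have hbd : ‖f' y‖ ≤ ‖f' x‖ + 1 := (hw'v ⟨hyw', hyv⟩).le
    have hvy : v ∈ 𝓝 y := by
      have : w ∩ A ∈ 𝓝 y := (hw.inter hA).mem_nhds ⟨hyw, hyA⟩
      exact mem_of_superset this fun z hz => hwv ⟨hz.1, subset_closure hz.2⟩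
    have : HasFDerivAt u (f' y) y := (hf'd y hyv).hasFDerivAt hvy
    rw [this.fderiv]
    exact hbd
  choose! O hOopen hxO c hc using hloc
  rcases hK.elim_nhds_subcover O (fun x hx => (hOopen x hx).mem_nhds (hxO x hx)) with ⟨t, ht, hcov⟩
  refine ⟨(t.sup fun x => (c x).toNNReal : NNReal), NNReal.coe_nonneg _, fun y hy => ?_⟩
  have hyK : y ∈ K := subset_closure hy
  rcases mem_iUnion₂.1 (hcov hyK) with ⟨x, hxt, hyO⟩
  have h1 : ‖fderiv ℝ u y‖ ≤ c x := hc x (ht x hxt) y ⟨hyO, hy⟩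
  have h2 : c x ≤ ((c x).toNNReal : ℝ) := Real.le_coe_toNNReal _
  have h3 : ((c x).toNNReal : NNReal) ≤ t.sup fun x => (c x).toNNReal :=
    Finset.le_sup (f := fun x => (c x).toNNReal) hxt
  exact h1.trans (h2.trans (by exact_mod_cast h3))

lemma aux_rpow_add_le {x y p : ℝ} (hx : 0 ≤ x) (hy : 0 ≤ y) (hp : 1 ≤ p) :
    (x + y) ^ p ≤ 2 ^ (p - 1) * (x ^ p + y ^ p) := by
  have h := NNReal.rpow_add_le_mul_rpow_add_rpow x.toNNReal y.toNNReal hp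
  have := NNReal.coe_le_coe.2 h
  push_cast [NNReal.coe_rpow, Real.coe_toNNReal x hx, Real.coe_toNNReal y hy] at this
  simpa using this

lemma aux_integrableOn_of_bounded {α : Type*} [MeasurableSpace α] {μ : Measure α}
    {f : α → ℝ} {s : Set α} (hs : MeasurableSet s) (hμ : μ s < ⊤)
    (hm : AEStronglyMeasurable f (μ.restrict s)) {C : ℝ} (hbd : ∀ x ∈ s, |f x| ≤ C) :
    IntegrableOn f s μ := by
  refine Integrable.mono' (g := fun _ => C) (integrableOn_const hμ.ne) hm ?_
  refine (ae_restrict_iff' hs).2 (Filter.Eventually.of_forall fun x hx => ?_)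
  simpa [Real.norm_eq_abs] using hbd x hx

section Annulus
variable {a b : ℝ} (ha : 0 < a) (hab : a < b)

lemma aux_mem_annulus (ha : 0 < a) (hab : a < b) {r θ : ℝ} (hr : r ∈ Ioo a b) :
    (r * Real.cos θ, r * Real.sin θ) ∈
      {q : ℝ × ℝ | a ^ 2 < q.1 ^ 2 + q.2 ^ 2 ∧ q.1 ^ 2 + q.2 ^ 2 < b ^ 2} := by
  have h : (r * Real.cos θ) ^ 2 + (r * Real.sin θ) ^ 2 = r ^ 2 := by
    have := Real.sin_sq_add_cos_sq θ; nlinarith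
  constructor <;> simp only [mem_setOf_eq, h]
  · exact pow_lt_pow_left₀ hr.1 ha.le two_ne_zero
  · exact pow_lt_pow_left₀ hr.2 (by linarith [hr.1]) two_ne_zero

lemma aux_mem_closure (ha : 0 < a) (hab : a < b) {s : ℝ} (hs : s ∈ Icc a b) (θ : ℝ) :
    (s * Real.cos θ, s * Real.sin θ) ∈
      closure {q : ℝ × ℝ | a ^ 2 < q.1 ^ 2 + q.2 ^ 2 ∧ q.1 ^ 2 + q.2 ^ 2 < b ^ 2} := by
  set A := {q : ℝ × ℝ | a ^ 2 < q.1 ^ 2 + q.2 ^ 2 ∧ q.1 ^ 2 + q.2 ^ 2 < b ^ 2}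
  have hφ : Continuous fun s : ℝ => (s * Real.cos θ, s * Real.sin θ) := by fun_prop
  have h1 : (fun s : ℝ => (s * Real.cos θ, s * Real.sin θ)) '' (Ioo a b) ⊆ A :=
    fun q ⟨r, hr, hrq⟩ => hrq ▸ aux_mem_annulus ha hab hr
  have h2 : (s * Real.cos θ, s * Real.sin θ) ∈
      (fun s : ℝ => (s * Real.cos θ, s * Real.sin θ)) '' closure (Ioo a b) :=
    ⟨s, by rwa [closure_Ioo hab.ne], rfl⟩
  exact closure_mono h1 (image_closure_subset_closure_image hφ h2)

lemma aux_isOpen : IsOpen {q : ℝ × ℝ | a ^ 2 < q.1 ^ 2 + q.2 ^ 2 ∧ q.1 ^ 2 + q.2 ^ 2 < b ^ 2} := by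
  have : Continuous fun q : ℝ × ℝ => q.1 ^ 2 + q.2 ^ 2 := by fun_prop
  exact (isOpen_lt continuous_const this).inter (isOpen_lt this continuous_const)

lemma aux_isCompact (hb : 0 < b) :
    IsCompact (closure {q : ℝ × ℝ | a ^ 2 < q.1 ^ 2 + q.2 ^ 2 ∧ q.1 ^ 2 + q.2 ^ 2 < b ^ 2}) := by
  have hsub : {q : ℝ × ℝ | a ^ 2 < q.1 ^ 2 + q.2 ^ 2 ∧ q.1 ^ 2 + q.2 ^ 2 < b ^ 2} ⊆
      Metric.closedBall 0 b := by
    rintro ⟨x, y⟩ ⟨-, h2⟩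
    simp only [mem_setOf_eq] at h2
    simp only [Metric.mem_closedBall, dist_zero_right, Prod.norm_def, Real.norm_eq_abs, sup_le_iff]
    constructor <;> rw [abs_le] <;> constructor <;> nlinarith
  have hcl : closure {q : ℝ × ℝ | a ^ 2 < q.1 ^ 2 + q.2 ^ 2 ∧ q.1 ^ 2 + q.2 ^ 2 < b ^ 2} ⊆
      Metric.closedBall 0 b := closure_minimal hsub Metric.isClosed_closedBall
  exact (isCompact_closedBall (0:ℝ×ℝ) b).of_isClosed_subset isClosed_closure hcl

end Annulus
variable {A : Set (ℝ × ℝ)} {a b : ℝ} {u : ℝ × ℝ → ℝ} {M₁ : ℝ}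

lemma aux_norm_dir_le (θ : ℝ) : ‖((Real.cos θ, Real.sin θ) : ℝ × ℝ)‖ ≤ 1 := by
  rw [Prod.norm_def]
  simp only [Real.norm_eq_abs, sup_le_iff]
  exact ⟨Real.abs_cos_le_one θ, Real.abs_sin_le_one θ⟩

lemma aux_intInt (hA : IsOpen A)
    (hmem : ∀ θ : ℝ, ∀ r ∈ Ioo a b, (r * Real.cos θ, r * Real.sin θ) ∈ A)
    (hM₁ : ∀ q ∈ A, ‖fderiv ℝ u q‖ ≤ M₁) (θ : ℝ) {c d : ℝ}
    (hac : a ≤ c) (hcd : c ≤ d) (hdb : d ≤ b) :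
    IntervalIntegrable (fun s => ‖fderiv ℝ u (s * Real.cos θ, s * Real.sin θ)‖) volume c d := by
  rw [intervalIntegrable_iff_integrableOn_Ioo_of_le hcd]
  have hmeas : Measurable fun s : ℝ => ‖fderiv ℝ u (s * Real.cos θ, s * Real.sin θ)‖ := by
    have h1 : Measurable fun q : ℝ × ℝ => ‖fderiv ℝ u q‖ := (measurable_fderiv ℝ u).norm
    exact h1.comp (by fun_prop)
  refine aux_integrableOn_of_bounded measurableSet_Ioo (by simp [Real.volume_Ioo]) 
    hmeas.aestronglyMeasurable (C := |M₁|) fun s hs => ?_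
  have hsA : (s * Real.cos θ, s * Real.sin θ) ∈ A :=
    hmem θ s ⟨lt_of_le_of_lt hac hs.1, lt_of_lt_of_le hs.2 hdb⟩
  rw [abs_of_nonneg (norm_nonneg _)]
  exact (hM₁ _ hsA).trans (le_abs_self _)

lemma aux_radial (hA : IsOpen A) (ha : 0 < a) (hab : a < b)
    (hmem : ∀ θ : ℝ, ∀ r ∈ Ioo a b, (r * Real.cos θ, r * Real.sin θ) ∈ A)
    (hclo : ∀ θ : ℝ, ∀ s ∈ Icc a b, (s * Real.cos θ, s * Real.sin θ) ∈ closure A)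
    (hu : ContDiffOn ℝ 1 u (closure A))
    (hM₁ : ∀ q ∈ A, ‖fderiv ℝ u q‖ ≤ M₁)
    (θ : ℝ) {r : ℝ} (hr : r ∈ Ioo a b) :
    |u (r * Real.cos θ, r * Real.sin θ)| ≤ |u (b * Real.cos θ, b * Real.sin θ)|
      + ∫ s in a..b, ‖fderiv ℝ u (s * Real.cos θ, s * Real.sin θ)‖ := by
  set γ : ℝ → ℝ × ℝ := fun s => (s * Real.cos θ, s * Real.sin θ) with hγ
  have hγc : Continuous γ := by fun_prop
  set g' : ℝ → ℝ := fun s => fderiv ℝ u (γ s) (Real.cos θ, Real.sin θ) with hg'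
  have hder : ∀ s ∈ Ioo a b, HasDerivAt (fun s => u (γ s)) (g' s) s := by
    intro s hs
    have hsA : γ s ∈ A := hmem θ s hs
    have hKn : closure A ∈ 𝓝 (γ s) := mem_of_superset (hA.mem_nhds hsA) subset_closure
    have hdiff : DifferentiableAt ℝ u (γ s) :=
      ((hu.contDiffAt hKn).differentiableAt one_ne_zero)
    have hγd : HasDerivAt γ (Real.cos θ, Real.sin θ) s := by
      have h1 : HasDerivAt (fun s : ℝ => s * Real.cos θ) (Real.cos θ) s := by
        simpa using (hasDerivAt_id s).mul_const (Real.cos θ)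
      have h2 : HasDerivAt (fun s : ℝ => s * Real.sin θ) (Real.sin θ) s := by
        simpa using (hasDerivAt_id s).mul_const (Real.sin θ)
      exact h1.prodMk h2
    exact hdiff.hasFDerivAt.comp_hasDerivAt s hγd
  have hcont : ContinuousOn (fun s => u (γ s)) (Icc r b) := by
    refine (hu.continuousOn.comp hγc.continuousOn ?_)
    intro s hs
    exact hclo θ s ⟨hr.1.le.trans hs.1, hs.2⟩
  have hint : IntervalIntegrable g' volume r b := by
    rw [intervalIntegrable_iff_integrableOn_Ioo_of_le hr.2.le]
    have hmeas : Measurable g' :=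
      (measurable_fderiv_apply_const ℝ u _).comp hγc.measurable
    refine aux_integrableOn_of_bounded measurableSet_Ioo (by simp [Real.volume_Ioo])
      hmeas.aestronglyMeasurable (C := |M₁|) fun s hs => ?_
    have hsA : γ s ∈ A := hmem θ s ⟨hr.1.trans hs.1, hs.2⟩
    calc |g' s| ≤ ‖fderiv ℝ u (γ s)‖ * ‖((Real.cos θ, Real.sin θ) : ℝ × ℝ)‖ := by
          simpa [Real.norm_eq_abs] using (fderiv ℝ u (γ s)).le_opNorm (Real.cos θ, Real.sin θ)
      _ ≤ |M₁| * 1 := by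
          refine mul_le_mul ((hM₁ _ hsA).trans (le_abs_self _)) (aux_norm_dir_le θ)
            (norm_nonneg _) (abs_nonneg _)
      _ = |M₁| := mul_one _
  have hftc : ∫ s in r..b, g' s = u (γ b) - u (γ r) := by
    refine integral_eq_sub_of_hasDeriv_right_of_le hr.2.le hcont (fun s hs => ?_) hint
    exact (hder s ⟨hr.1.trans hs.1, hs.2⟩).hasDerivWithinAt
  have hD : IntervalIntegrable (fun s => ‖fderiv ℝ u (γ s)‖) volume r b :=
    aux_intInt hA hmem hM₁ θ hr.1.le hr.2.le le_rfl
  have hbound : |∫ s in r..b, g' s| ≤ ∫ s in r..b, ‖fderiv ℝ u (γ s)‖ := by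
    have h := intervalIntegral.norm_integral_le_abs_of_norm_le (μ := volume)
      (f := g') (g := fun s => ‖fderiv ℝ u (γ s)‖) ?_ hD
    · rw [abs_of_nonneg] at h
      · exact h
      · refine intervalIntegral.integral_nonneg hr.2.le fun s _ => norm_nonneg _
    · rw [uIoc_of_le hr.2.le]
      refine (ae_restrict_iff' measurableSet_Ioc).2 (Filter.Eventually.of_forall fun s hs => ?_)
      simpa [Real.norm_eq_abs] using (fderiv ℝ u (γ s)).le_opNorm_of_le (aux_norm_dir_le θ)
  have hmono : ∫ s in r..b, ‖fderiv ℝ u (γ s)‖ ≤ ∫ s in a..b, ‖fderiv ℝ u (γ s)‖ := by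
    refine intervalIntegral.integral_mono_interval hr.1.le hr.2.le le_rfl
      (Filter.Eventually.of_forall fun s => norm_nonneg _)
      (aux_intInt hA hmem hM₁ θ le_rfl hab.le le_rfl)
  have : |u (γ r)| ≤ |u (γ b)| + |∫ s in r..b, g' s| := by
    have := hftc
    have h2 : u (γ r) = u (γ b) - ∫ s in r..b, g' s := by linarith [hftc]
    rw [h2]
    exact (abs_sub _ _).trans (by simp [abs_abs])
  calc |u (γ r)| ≤ |u (γ b)| + |∫ s in r..b, g' s| := this
    _ ≤ |u (γ b)| + ∫ s in a..b, ‖fderiv ℝ u (γ s)‖ := by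
        exact add_le_add le_rfl (hbound.trans hmono)

lemma aux_jensen {f : ℝ → ℝ} {a b p C : ℝ} (hab : a < b) (hp : 1 ≤ p)
    (hf0 : ∀ s, 0 ≤ f s) (hmeas : Measurable f) (hbd : ∀ s ∈ Ioo a b, f s ≤ C) :
    (∫ s in Ioo a b, f s) ^ p ≤ (b - a) ^ (p - 1) * ∫ s in Ioo a b, f s ^ p := by
  have hba : 0 < b - a := by linarith
  set μ := volume.restrict (Ioo a b) with hμ
  have hμuniv : μ univ = ENNReal.ofReal (b - a) := by
    rw [hμ, Measure.restrict_apply_univ, Real.volume_Ioo]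
  haveI : IsFiniteMeasure μ := ⟨by rw [hμuniv]; exact ENNReal.ofReal_lt_top⟩
  haveI : NeZero μ := by
    refine ⟨fun h => ?_⟩
    have := hμuniv
    rw [h] at this
    simp only [Measure.coe_zero, Pi.zero_apply] at this
    rw [eq_comm, ENNReal.ofReal_eq_zero] at this
    linarith
  have hintf : Integrable f μ :=
    aux_integrableOn_of_bounded measurableSet_Ioo (by simp [Real.volume_Ioo])
      hmeas.aestronglyMeasurable (C := |C|) fun s hs => by
        rw [abs_of_nonneg (hf0 s)]; exact (hbd s hs).trans (le_abs_self _)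
  have hintfp : Integrable (fun s => f s ^ p) μ := by
    have hmeasp : Measurable fun s => f s ^ p := (Real.continuous_rpow_const (by linarith : (0:ℝ) ≤ p)).measurable.comp hmeas
    refine aux_integrableOn_of_bounded measurableSet_Ioo (by simp [Real.volume_Ioo])
      hmeasp.aestronglyMeasurable (C := |C| ^ p) fun s hs => ?_
    rw [abs_of_nonneg (Real.rpow_nonneg (hf0 s) p)]
    exact Real.rpow_le_rpow (hf0 s) ((hbd s hs).trans (le_abs_self _)) (by linarith)
  have hjen : (⨍ x, f x ∂μ) ^ p ≤ ⨍ x, f x ^ p ∂μ := by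
    refine (convexOn_rpow hp).map_average_le ?_ isClosed_Ici
      (Filter.Eventually.of_forall fun s => hf0 s) hintf hintfp
    intro x hx
    exact (Real.continuousAt_rpow_const x p (Or.inr (by linarith))).continuousWithinAt
  rw [average_eq, average_eq, measureReal_def, hμuniv, ENNReal.toReal_ofReal hba.le, smul_eq_mul, smul_eq_mul]
    at hjen
  set I := ∫ x, f x ∂μ with hI
  set Ip := ∫ x, f x ^ p ∂μ with hIp
  have hI0 : 0 ≤ I := integral_nonneg fun s => hf0 s
  have h1 : ((b - a)⁻¹ * I) ^ p = ((b - a)⁻¹) ^ p * I ^ p :=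
    Real.mul_rpow (by positivity) hI0
  rw [h1] at hjen
  have h2 : (b - a) ^ p * (((b - a)⁻¹) ^ p * I ^ p) = I ^ p := by
    rw [← mul_assoc, ← Real.mul_rpow hba.le (by positivity), mul_inv_cancel₀ hba.ne',
      Real.one_rpow, one_mul]
  have h3 : (b - a) ^ p * ((b - a)⁻¹ * Ip) = (b - a) ^ (p - 1) * Ip := by
    rw [← mul_assoc]
    congr 1
    rw [Real.rpow_sub hba, Real.rpow_one, div_eq_mul_inv]
  calc I ^ p = (b - a) ^ p * (((b - a)⁻¹) ^ p * I ^ p) := h2.symm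
    _ ≤ (b - a) ^ p * ((b - a)⁻¹ * Ip) := by
        refine mul_le_mul_of_nonneg_left hjen (Real.rpow_nonneg hba.le p)
    _ = (b - a) ^ (p - 1) * Ip := h3

lemma aux_sq_lt_sq {x y : ℝ} (hx : 0 ≤ x) (hy : 0 ≤ y) : x ^ 2 < y ^ 2 ↔ x < y := by
  constructor
  · intro h
    by_contra hc
    push_neg at hc
    exact absurd (pow_le_pow_left₀ hy hc 2) (not_le.2 h)
  · intro h
    exact pow_lt_pow_left₀ h hx two_ne_zero

lemma aux_polar {a b : ℝ} (ha : 0 < a) (hab : a < b) (f : ℝ × ℝ → ℝ) :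
    ∫ q in {q : ℝ × ℝ | a ^ 2 < q.1 ^ 2 + q.2 ^ 2 ∧ q.1 ^ 2 + q.2 ^ 2 < b ^ 2}, f q
      = ∫ z in Ioo a b ×ˢ Ioo (-π) π, z.1 * f (z.1 * Real.cos z.2, z.1 * Real.sin z.2) := by
  set A := {q : ℝ × ℝ | a ^ 2 < q.1 ^ 2 + q.2 ^ 2 ∧ q.1 ^ 2 + q.2 ^ 2 < b ^ 2} with hA
  have hAmeas : MeasurableSet A := by
    have : Continuous fun q : ℝ × ℝ => q.1 ^ 2 + q.2 ^ 2 := by fun_prop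
    exact ((isOpen_lt continuous_const this).inter (isOpen_lt this continuous_const)).measurableSet
  have h := integral_comp_polarCoord_symm (A.indicator f)
  rw [MeasureTheory.integral_indicator hAmeas] at h
  rw [← h]
  have hcong : ∀ z ∈ polarCoord.target,
      z.1 • A.indicator f (polarCoord.symm z)
        = (Ioo a b ×ˢ Ioo (-π) π).indicator
            (fun z => z.1 * f (z.1 * Real.cos z.2, z.1 * Real.sin z.2)) z := by
    rintro ⟨r, θ⟩ ⟨hr, hθ⟩
    simp only [polarCoord_target, mem_Ioi, mem_prod] at hr hθ ⊢
    have hsymm : polarCoord.symm (r, θ) = (r * Real.cos θ, r * Real.sin θ) := by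
      simp [polarCoord]
    have hsq : (r * Real.cos θ) ^ 2 + (r * Real.sin θ) ^ 2 = r ^ 2 := by
      have := Real.sin_sq_add_cos_sq θ; nlinarith
    have hmem : polarCoord.symm (r, θ) ∈ A ↔ r ∈ Ioo a b := by
      rw [hsymm, hA, mem_setOf_eq, hsq, aux_sq_lt_sq ha.le hr.le,
        aux_sq_lt_sq hr.le (ha.trans hab).le]
      exact Iff.rfl
    by_cases hcase : r ∈ Ioo a b
    · rw [indicator_of_mem (hmem.2 hcase), indicator_of_mem (by exact ⟨hcase, hθ⟩), hsymm,
        smul_eq_mul]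
    · rw [indicator_of_notMem (fun hmem' => hcase (hmem.1 hmem')),
        indicator_of_notMem (fun hmem' => hcase hmem'.1), smul_zero]
  rw [setIntegral_congr_fun polarCoord.open_target.measurableSet hcong,
    setIntegral_indicator (measurableSet_Ioo.prod measurableSet_Ioo)]
  congr 1
  rw [polarCoord_target, inter_eq_self_of_subset_right]
  exact prod_mono_left fun r hr => lt_trans ha hr.1

lemma aux_vol_prod_lt_top {a b c d : ℝ} :
    volume (Ioo a b ×ˢ Ioo c d) < ⊤ := by
  rw [Measure.volume_eq_prod, Measure.prod_prod, Real.volume_Ioo, Real.volume_Ioo]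
  exact ENNReal.mul_lt_top ENNReal.ofReal_lt_top ENNReal.ofReal_lt_top

lemma aux_prod_snd {E : ℝ → ℝ} {a b c d : ℝ} (hab : a ≤ b) :
    ∫ z in Ioo a b ×ˢ Ioo c d, E z.2 = (b - a) * ∫ θ in Ioo c d, E θ := by
  rw [Measure.volume_eq_prod, ← Measure.prod_restrict]
  have : (fun z : ℝ × ℝ => E z.2) = fun z : ℝ × ℝ => (fun _ : ℝ => (1:ℝ)) z.1 * E z.2 := by
    funext z; ring
  rw [this]
  rw [MeasureTheory.integral_prod_mul (μ := volume.restrict (Ioo a b))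
    (ν := volume.restrict (Ioo c d)) (f := fun _ : ℝ => (1:ℝ)) (g := E)]
  simp [Real.volume_Ioo, ENNReal.toReal_ofReal (by linarith : (0:ℝ) ≤ b - a), hab]

lemma aux_fubini_swap {F : ℝ × ℝ → ℝ} {a b c d C : ℝ}
    (hmeas : AEStronglyMeasurable F (volume.restrict (Ioo a b ×ˢ Ioo c d)))
    (hbd : ∀ z ∈ Ioo a b ×ˢ Ioo c d, |F z| ≤ C) :
    ∫ z in Ioo a b ×ˢ Ioo c d, F z = ∫ θ in Ioo c d, ∫ r in Ioo a b, F (r, θ) := by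
  have hint : IntegrableOn F (Ioo a b ×ˢ Ioo c d) volume :=
    aux_integrableOn_of_bounded (measurableSet_Ioo.prod measurableSet_Ioo)
      aux_vol_prod_lt_top hmeas hbd
  rw [IntegrableOn, Measure.volume_eq_prod, ← Measure.prod_restrict] at hint
  rw [Measure.volume_eq_prod, ← Measure.prod_restrict]
  exact integral_prod_symm F hint

lemma aux_periodic_integral {f : ℝ → ℝ} (hf : Function.Periodic f (2 * π)) :
    ∫ θ in Ioo (-π) π, f θ = ∫ θ in (0:ℝ)..(2 * π), f θ := by
  have hππ : -π ≤ π := by linarith [Real.pi_pos]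
  have h1 : ∫ θ in Ioo (-π) π, f θ = ∫ θ in (-π)..π, f θ := by
    rw [intervalIntegral.integral_of_le hππ, MeasureTheory.integral_Ioc_eq_integral_Ioo]
  have h2 := hf.intervalIntegral_add_eq 0 (-π)
  have h3 : -π + 2 * π = π := by ring
  rw [zero_add, h3] at h2
  rw [h1, ← h2]
/-- Poincaré inequality with boundary control on the annulus
`Ω = {a² < x²+y² < b²}`: the `L^p` norm of `u` is controlled by the `L^p` norm
of its gradient plus the `L^p` norm of its trace on the outer circle (written
via the arc-length parametrization `θ ↦ (b cos θ, b sin θ)`). -/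
theorem poincare_annulus_boundary (a b : ℝ) (ha : 0 < a) (hab : a < b)
    (p : ℝ) (hp : 1 ≤ p) :
    ∃ C > (0:ℝ), ∀ u : ℝ × ℝ → ℝ,
      ContDiffOn ℝ 1 u
        (closure {q : ℝ × ℝ | a ^ 2 < q.1 ^ 2 + q.2 ^ 2 ∧ q.1 ^ 2 + q.2 ^ 2 < b ^ 2}) →
      ∫ q in {q : ℝ × ℝ | a ^ 2 < q.1 ^ 2 + q.2 ^ 2 ∧ q.1 ^ 2 + q.2 ^ 2 < b ^ 2},
          |u q| ^ p
        ≤ C * ((∫ θ in (0:ℝ)..(2 * π), |u (b * Real.cos θ, b * Real.sin θ)| ^ p * b)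
            + ∫ q in {q : ℝ × ℝ | a ^ 2 < q.1 ^ 2 + q.2 ^ 2 ∧ q.1 ^ 2 + q.2 ^ 2 < b ^ 2},
                ‖fderiv ℝ u q‖ ^ p) := by
  have hb : 0 < b := ha.trans hab
  have hba : (0:ℝ) < b - a := by linarith
  have hπ : (0:ℝ) < π := Real.pi_pos
  have hp0 : (0:ℝ) ≤ p := by linarith
  have hP : (0:ℝ) < 2 ^ (p - 1) := Real.rpow_pos_of_pos two_pos _
  have hS : (0:ℝ) < (b - a) ^ p := Real.rpow_pos_of_pos hba _
  have hQ : (0:ℝ) < (b - a) ^ (p - 1) := Real.rpow_pos_of_pos hba _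
  refine ⟨2 ^ (p - 1) * ((b - a) + (b / a) * (b - a) ^ p), by positivity, fun u hu => ?_⟩
  set A := {q : ℝ × ℝ | a ^ 2 < q.1 ^ 2 + q.2 ^ 2 ∧ q.1 ^ 2 + q.2 ^ 2 < b ^ 2} with hAdef
  have hAopen : IsOpen A := aux_isOpen
  have hK : IsCompact (closure A) := aux_isCompact hb
  obtain ⟨M₀, hM₀⟩ := hK.exists_bound_of_continuousOn hu.continuousOn
  obtain ⟨M₁, hM₁0, hM₁⟩ := aux_fderiv_bound hAopen hK hu
  have hmem : ∀ θ : ℝ, ∀ r ∈ Ioo a b, (r * Real.cos θ, r * Real.sin θ) ∈ A :=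
    fun θ r hr => aux_mem_annulus ha hab hr
  have hclo : ∀ θ : ℝ, ∀ s ∈ Icc a b, (s * Real.cos θ, s * Real.sin θ) ∈ closure A :=
    fun θ s hs => aux_mem_closure ha hab hs θ
  set D : ℝ × ℝ → ℝ := fun q => ‖fderiv ℝ u q‖ with hDdef
  set T : ℝ → ℝ := fun θ => |u (b * Real.cos θ, b * Real.sin θ)| ^ p with hTdef
  set H : ℝ → ℝ := fun θ => ∫ s in a..b, D (s * Real.cos θ, s * Real.sin θ) with hHdef
  set Hp : ℝ → ℝ := fun θ => ∫ s in Ioo a b, D (s * Real.cos θ, s * Real.sin θ) ^ p with hHpdef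
  -- basic measurability / continuity
  have hDmeas : Measurable D := (measurable_fderiv ℝ u).norm
  have hDγmeas : Measurable fun z : ℝ × ℝ => D (z.1 * Real.cos z.2, z.1 * Real.sin z.2) :=
    hDmeas.comp (by fun_prop)
  have hrpowc : Continuous fun x : ℝ => x ^ p := Real.continuous_rpow_const hp0
  have hubc : Continuous fun θ : ℝ => u (b * Real.cos θ, b * Real.sin θ) := by
    refine hu.continuousOn.comp_continuous (by fun_prop) fun θ => hclo θ b ⟨hab.le, le_rfl⟩
  have hTcont : Continuous T := hrpowc.comp hubc.abs
  have hT0 : ∀ θ, 0 ≤ T θ := fun θ => Real.rpow_nonneg (abs_nonneg _) p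
  have hTbd : ∀ θ, T θ ≤ |M₀| ^ p := by
    intro θ
    refine Real.rpow_le_rpow (abs_nonneg _) ?_ hp0
    have := hM₀ _ (hclo θ b ⟨hab.le, le_rfl⟩)
    rw [Real.norm_eq_abs] at this
    exact this.trans (le_abs_self _)
  have hHIoo : ∀ θ, H θ = ∫ s in Ioo a b, D (s * Real.cos θ, s * Real.sin θ) := by
    intro θ
    show (∫ s in a..b, D (s * Real.cos θ, s * Real.sin θ)) = _
    rw [intervalIntegral.integral_of_le hab.le, MeasureTheory.integral_Ioc_eq_integral_Ioo]
  have hDγbd : ∀ θ : ℝ, ∀ s ∈ Ioo a b, D (s * Real.cos θ, s * Real.sin θ) ≤ |M₁| :=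
    fun θ s hs => (hM₁ _ (hmem θ s hs)).trans (le_abs_self _)
  have hH0 : ∀ θ, 0 ≤ H θ := by
    intro θ
    rw [hHIoo θ]
    exact setIntegral_nonneg measurableSet_Ioo fun s _ => norm_nonneg _
  have hHmeas : Measurable H := by
    have : (fun z : ℝ × ℝ => D (z.2 * Real.cos z.1, z.2 * Real.sin z.1))
        = (fun z : ℝ × ℝ => D (z.1 * Real.cos z.2, z.1 * Real.sin z.2)) ∘ Prod.swap := rfl
    have hm : StronglyMeasurable fun z : ℝ × ℝ => D (z.2 * Real.cos z.1, z.2 * Real.sin z.1) :=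
      (hDγmeas.comp measurable_swap).stronglyMeasurable
    have := hm.integral_prod_right' (ν := volume.restrict (Ioo a b))
    have heq : H = fun θ => ∫ s in Ioo a b, D (s * Real.cos θ, s * Real.sin θ) :=
      funext hHIoo
    rw [heq]
    exact this.measurable
  have hHbd : ∀ θ, H θ ≤ |M₁| * (b - a) := by
    intro θ
    rw [hHIoo θ]
    calc (∫ s in Ioo a b, D (s * Real.cos θ, s * Real.sin θ))
        ≤ ∫ _ in Ioo a b, |M₁| := by
          refine setIntegral_mono_on ?_ ?_ measurableSet_Ioo (hDγbd θ)
          · refine aux_integrableOn_of_bounded measurableSet_Ioo (by simp [Real.volume_Ioo])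
              (hDmeas.comp (by fun_prop : Measurable fun s : ℝ =>
                ((s * Real.cos θ, s * Real.sin θ) : ℝ × ℝ))).aestronglyMeasurable
              (C := |M₁|) fun s hs => by
                rw [abs_of_nonneg (norm_nonneg _)]; exact hDγbd θ s hs
          · exact integrableOn_const (by simp [Real.volume_Ioo])
      _ = |M₁| * (b - a) := by
          rw [setIntegral_const, Real.volume_real_Ioo_of_le hab.le, smul_eq_mul,
            mul_comm]
  have hHpmeas : Measurable Hp := by
    have hm : StronglyMeasurable fun z : ℝ × ℝ =>
        D (z.2 * Real.cos z.1, z.2 * Real.sin z.1) ^ p :=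
      ((hrpowc.measurable.comp hDγmeas).comp measurable_swap).stronglyMeasurable
    exact (hm.integral_prod_right' (ν := volume.restrict (Ioo a b))).measurable
  have hHp0 : ∀ θ, 0 ≤ Hp θ :=
    fun θ => setIntegral_nonneg measurableSet_Ioo fun s _ => Real.rpow_nonneg (norm_nonneg _) p
  have hHpbd : ∀ θ, Hp θ ≤ |M₁| ^ p * (b - a) := by
    intro θ
    calc Hp θ ≤ ∫ _ in Ioo a b, |M₁| ^ p := by
          refine setIntegral_mono_on ?_ ?_ measurableSet_Ioo ?_
          · refine aux_integrableOn_of_bounded measurableSet_Ioo (by simp [Real.volume_Ioo])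
              ((hrpowc.measurable.comp (hDmeas.comp (by fun_prop : Measurable fun s : ℝ =>
                ((s * Real.cos θ, s * Real.sin θ) : ℝ × ℝ))))).aestronglyMeasurable
              (C := |M₁| ^ p) fun s hs => by
                rw [abs_of_nonneg (Real.rpow_nonneg (norm_nonneg _) p)]
                exact Real.rpow_le_rpow (norm_nonneg _) (hDγbd θ s hs) hp0
          · exact integrableOn_const (by simp [Real.volume_Ioo])
          · exact fun s hs => Real.rpow_le_rpow (norm_nonneg _) (hDγbd θ s hs) hp0
      _ = |M₁| ^ p * (b - a) := by
          rw [setIntegral_const, Real.volume_real_Ioo_of_le hab.le, smul_eq_mul,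
            mul_comm]
  -- pointwise radial estimate
  have hpoint : ∀ θ : ℝ, ∀ r ∈ Ioo a b,
      |u (r * Real.cos θ, r * Real.sin θ)| ^ p ≤ 2 ^ (p - 1) * (T θ + H θ ^ p) := by
    intro θ r hr
    have h1 := aux_radial hAopen ha hab hmem hclo hu hM₁ θ hr
    have h2 : |u (r * Real.cos θ, r * Real.sin θ)| ^ p
        ≤ (|u (b * Real.cos θ, b * Real.sin θ)| + H θ) ^ p :=
      Real.rpow_le_rpow (abs_nonneg _) h1 hp0
    exact h2.trans (aux_rpow_add_le (abs_nonneg _) (hH0 θ) hp)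
  -- Jensen for each θ
  have hjen : ∀ θ : ℝ, H θ ^ p ≤ (b - a) ^ (p - 1) * Hp θ := by
    intro θ
    rw [hHIoo θ]
    exact aux_jensen hab hp (fun s => norm_nonneg _)
      (hDmeas.comp (by fun_prop)) (hDγbd θ)
  -- region facts
  have hRmeas : MeasurableSet (Ioo a b ×ˢ Ioo (-π) π) := measurableSet_Ioo.prod measurableSet_Ioo
  have hAmeas : MeasurableSet A := hAopen.measurableSet
  -- change of variables
  have hLHS : (∫ q in A, |u q| ^ p)
      = ∫ z in Ioo a b ×ˢ Ioo (-π) π, z.1 * |u (z.1 * Real.cos z.2, z.1 * Real.sin z.2)| ^ p := by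
    rw [hAdef]; exact aux_polar ha hab (fun q => |u q| ^ p)
  have hGpolar : (∫ q in A, D q ^ p)
      = ∫ z in Ioo a b ×ˢ Ioo (-π) π, z.1 * D (z.1 * Real.cos z.2, z.1 * Real.sin z.2) ^ p := by
    rw [hAdef]; exact aux_polar ha hab (fun q => D q ^ p)
  -- integrability of polar integrands
  have huγcont : ContinuousOn (fun z : ℝ × ℝ => u (z.1 * Real.cos z.2, z.1 * Real.sin z.2))
      (Ioo a b ×ˢ Ioo (-π) π) := by
    refine hu.continuousOn.comp (Continuous.continuousOn (by fun_prop)) ?_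
    rintro z ⟨hz1, _⟩
    exact subset_closure (hmem z.2 z.1 hz1)
  have huγbd : ∀ z : ℝ × ℝ, z ∈ Ioo a b ×ˢ Ioo (-π) π →
      |u (z.1 * Real.cos z.2, z.1 * Real.sin z.2)| ^ p ≤ |M₀| ^ p := by
    rintro z ⟨hz1, _⟩
    refine Real.rpow_le_rpow (abs_nonneg _) ?_ hp0
    have := hM₀ _ (subset_closure (hmem z.2 z.1 hz1))
    rw [Real.norm_eq_abs] at this
    exact this.trans (le_abs_self _)
  have hint1 : IntegrableOn
      (fun z : ℝ × ℝ => z.1 * |u (z.1 * Real.cos z.2, z.1 * Real.sin z.2)| ^ p)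
      (Ioo a b ×ˢ Ioo (-π) π) := by
    refine aux_integrableOn_of_bounded hRmeas aux_vol_prod_lt_top ?_ (C := b * |M₀| ^ p) ?_
    · refine ContinuousOn.aestronglyMeasurable ?_ hRmeas
      exact continuous_fst.continuousOn.mul
        ((huγcont.abs).rpow_const fun z _ => Or.inr hp0)
    · rintro z ⟨hz1, hz2⟩
      rw [abs_of_nonneg (mul_nonneg (by linarith [hz1.1] : (0:ℝ) ≤ z.1)
        (Real.rpow_nonneg (abs_nonneg _) p))]
      exact mul_le_mul hz1.2.le (huγbd z ⟨hz1, hz2⟩) (Real.rpow_nonneg (abs_nonneg _) p) hb.le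
  have hHppow_bd : ∀ θ, H θ ^ p ≤ (|M₁| * (b - a)) ^ p :=
    fun θ => Real.rpow_le_rpow (hH0 θ) (hHbd θ) hp0
  have hEmeas : Measurable fun θ => T θ + H θ ^ p :=
    hTcont.measurable.add (hrpowc.measurable.comp hHmeas)
  have hint2 : IntegrableOn (fun z : ℝ × ℝ => b * (2 ^ (p - 1) * (T z.2 + H z.2 ^ p)))
      (Ioo a b ×ˢ Ioo (-π) π) := by
    refine aux_integrableOn_of_bounded hRmeas aux_vol_prod_lt_top
      ((measurable_const.mul (measurable_const.mul
        (hEmeas.comp measurable_snd))).aestronglyMeasurable)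
      (C := b * (2 ^ (p - 1) * (|M₀| ^ p + (|M₁| * (b - a)) ^ p))) ?_
    rintro z -
    rw [abs_of_nonneg (mul_nonneg hb.le (mul_nonneg hP.le
      (add_nonneg (hT0 z.2) (Real.rpow_nonneg (hH0 z.2) p))))]
    refine mul_le_mul_of_nonneg_left (mul_le_mul_of_nonneg_left ?_ hP.le) hb.le
    exact add_le_add (hTbd z.2) (hHppow_bd z.2)
  -- step 2 : pointwise domination on the region
  have hstep2 : (∫ z in Ioo a b ×ˢ Ioo (-π) π,
        z.1 * |u (z.1 * Real.cos z.2, z.1 * Real.sin z.2)| ^ p)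
      ≤ ∫ z in Ioo a b ×ˢ Ioo (-π) π, b * (2 ^ (p - 1) * (T z.2 + H z.2 ^ p)) := by
    refine setIntegral_mono_on hint1 hint2 hRmeas ?_
    rintro z ⟨hz1, -⟩
    exact mul_le_mul hz1.2.le (hpoint z.2 z.1 hz1)
      (Real.rpow_nonneg (abs_nonneg _) p) hb.le
  -- step 3 : separate variables
  have hstep3 : (∫ z in Ioo a b ×ˢ Ioo (-π) π, b * (2 ^ (p - 1) * (T z.2 + H z.2 ^ p)))
      = b * 2 ^ (p - 1) * ((b - a) * ∫ θ in Ioo (-π) π, (T θ + H θ ^ p)) := by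
    have h : (fun z : ℝ × ℝ => b * (2 ^ (p - 1) * (T z.2 + H z.2 ^ p)))
        = fun z : ℝ × ℝ => (b * 2 ^ (p - 1)) * ((fun θ => T θ + H θ ^ p) z.2) := by
      funext z; ring
    rw [h, MeasureTheory.integral_const_mul,
      aux_prod_snd (E := fun θ => T θ + H θ ^ p) hab.le]
  -- split the θ-integral
  have hintT : IntegrableOn T (Ioo (-π) π) :=
    aux_integrableOn_of_bounded measurableSet_Ioo (by simp [Real.volume_Ioo])
      hTcont.aestronglyMeasurable (C := |M₀| ^ p)
      fun θ _ => by rw [abs_of_nonneg (hT0 θ)]; exact hTbd θ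
  have hintH2 : IntegrableOn (fun θ => H θ ^ p) (Ioo (-π) π) :=
    aux_integrableOn_of_bounded measurableSet_Ioo (by simp [Real.volume_Ioo])
      (hrpowc.measurable.comp hHmeas).aestronglyMeasurable (C := (|M₁| * (b - a)) ^ p)
      fun θ _ => by
        rw [abs_of_nonneg (Real.rpow_nonneg (hH0 θ) p)]; exact hHppow_bd θ
  have hsplit : (∫ θ in Ioo (-π) π, (T θ + H θ ^ p))
      = (∫ θ in Ioo (-π) π, T θ) + ∫ θ in Ioo (-π) π, H θ ^ p :=
    MeasureTheory.integral_add hintT hintH2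
  -- boundary term via periodicity
  have hTper : Function.Periodic T (2 * π) := by
    intro θ
    simp only [hTdef, Real.cos_add_two_pi, Real.sin_add_two_pi]
  have hBeq : (∫ θ in (0:ℝ)..(2 * π), T θ * b)
      = (∫ θ in Ioo (-π) π, T θ) * b := by
    rw [aux_periodic_integral hTper]
    exact intervalIntegral.integral_mul_const b T
  -- Jensen integrated
  have hintHp : IntegrableOn Hp (Ioo (-π) π) :=
    aux_integrableOn_of_bounded measurableSet_Ioo (by simp [Real.volume_Ioo])
      hHpmeas.aestronglyMeasurable (C := |M₁| ^ p * (b - a))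
      fun θ _ => by rw [abs_of_nonneg (hHp0 θ)]; exact hHpbd θ
  have hstep5 : (∫ θ in Ioo (-π) π, H θ ^ p)
      ≤ (b - a) ^ (p - 1) * ∫ θ in Ioo (-π) π, Hp θ := by
    calc (∫ θ in Ioo (-π) π, H θ ^ p)
        ≤ ∫ θ in Ioo (-π) π, (b - a) ^ (p - 1) * Hp θ :=
          setIntegral_mono_on hintH2 (hintHp.const_mul _) measurableSet_Ioo
            fun θ _ => hjen θ
      _ = (b - a) ^ (p - 1) * ∫ θ in Ioo (-π) π, Hp θ := MeasureTheory.integral_const_mul _ _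
  -- Fubini back to the annulus for the gradient
  have hDγpbd : ∀ z : ℝ × ℝ, z ∈ Ioo a b ×ˢ Ioo (-π) π →
      |D (z.1 * Real.cos z.2, z.1 * Real.sin z.2) ^ p| ≤ |M₁| ^ p := by
    rintro z ⟨hz1, -⟩
    rw [abs_of_nonneg (Real.rpow_nonneg (norm_nonneg _) p)]
    exact Real.rpow_le_rpow (norm_nonneg _) (hDγbd z.2 z.1 hz1) hp0
  have hstep6 : (∫ z in Ioo a b ×ˢ Ioo (-π) π, D (z.1 * Real.cos z.2, z.1 * Real.sin z.2) ^ p)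
      = ∫ θ in Ioo (-π) π, Hp θ := by
    rw [aux_fubini_swap (F := fun z : ℝ × ℝ => D (z.1 * Real.cos z.2, z.1 * Real.sin z.2) ^ p)
      ((hrpowc.measurable.comp hDγmeas).aestronglyMeasurable) hDγpbd]
  have hintDγp : IntegrableOn
      (fun z : ℝ × ℝ => D (z.1 * Real.cos z.2, z.1 * Real.sin z.2) ^ p)
      (Ioo a b ×ˢ Ioo (-π) π) :=
    aux_integrableOn_of_bounded hRmeas aux_vol_prod_lt_top
      ((hrpowc.measurable.comp hDγmeas).aestronglyMeasurable) hDγpbd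
  have hintDγp1 : IntegrableOn
      (fun z : ℝ × ℝ => z.1 * D (z.1 * Real.cos z.2, z.1 * Real.sin z.2) ^ p)
      (Ioo a b ×ˢ Ioo (-π) π) := by
    refine aux_integrableOn_of_bounded hRmeas aux_vol_prod_lt_top
      ((measurable_fst.mul (hrpowc.measurable.comp hDγmeas)).aestronglyMeasurable)
      (C := b * |M₁| ^ p) ?_
    rintro z ⟨hz1, hz2⟩
    rw [abs_mul, abs_of_nonneg (by linarith [hz1.1] : (0:ℝ) ≤ z.1)]
    exact mul_le_mul hz1.2.le (hDγpbd z ⟨hz1, hz2⟩) (abs_nonneg _) hb.le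
  have hstep7 : a * (∫ θ in Ioo (-π) π, Hp θ) ≤ ∫ q in A, D q ^ p := by
    rw [← hstep6, hGpolar, ← MeasureTheory.integral_const_mul]
    refine setIntegral_mono_on (hintDγp.const_mul _) hintDγp1 hRmeas ?_
    rintro z ⟨hz1, -⟩
    exact mul_le_mul_of_nonneg_right hz1.1.le (Real.rpow_nonneg (norm_nonneg _) p)
  -- nonnegativity
  have hG0 : (0:ℝ) ≤ ∫ q in A, D q ^ p :=
    setIntegral_nonneg hAmeas fun q _ => Real.rpow_nonneg (norm_nonneg _) p
  have hIT0 : (0:ℝ) ≤ ∫ θ in Ioo (-π) π, T θ :=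
    setIntegral_nonneg measurableSet_Ioo fun θ _ => hT0 θ
  have hIHp0 : (0:ℝ) ≤ ∫ θ in Ioo (-π) π, Hp θ :=
    setIntegral_nonneg measurableSet_Ioo fun θ _ => hHp0 θ
  -- final algebra
  have hSQ : (b - a) ^ p = (b - a) ^ (p - 1) * (b - a) := by
    have h := Real.rpow_add_one hba.ne' (p - 1)
    rw [sub_add_cancel] at h
    rw [h]
  set IT := (∫ θ in Ioo (-π) π, T θ) with hITdef
  set IH := (∫ θ in Ioo (-π) π, H θ ^ p) with hIHdef
  set IHp := (∫ θ in Ioo (-π) π, Hp θ) with hIHpdef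
  have hGDeq : (∫ q in A, ‖fderiv ℝ u q‖ ^ p) = ∫ q in A, D q ^ p := rfl
  rw [hGDeq]
  set G := (∫ q in A, D q ^ p) with hGdef
  rw [hBeq]
  have hchain : (∫ q in A, |u q| ^ p)
      ≤ b * 2 ^ (p - 1) * ((b - a) * (IT + (b - a) ^ (p - 1) * IHp)) := by
    rw [hLHS]
    refine hstep2.trans ?_
    rw [hstep3, hsplit]
    refine mul_le_mul_of_nonneg_left ?_ (by positivity)
    exact mul_le_mul_of_nonneg_left (add_le_add le_rfl hstep5) hba.le
  have hIHpG : IHp ≤ a⁻¹ * G := by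
    rw [inv_mul_eq_div, le_div_iff₀ ha]
    linarith [hstep7]
  refine hchain.trans ?_
  have key : b * 2 ^ (p - 1) * ((b - a) * (IT + (b - a) ^ (p - 1) * IHp))
      ≤ 2 ^ (p - 1) * ((b - a) + b / a * (b - a) ^ p) * (IT * b + G) := by
    have e1 : (0:ℝ) < b / a := div_pos hb ha
    have h2 : b * 2 ^ (p - 1) * ((b - a) * (IT + (b - a) ^ (p - 1) * IHp))
        = 2 ^ (p - 1) * (b - a) * (IT * b)
          + 2 ^ (p - 1) * (b - a) * (b - a) ^ (p - 1) * (b * IHp) := by ring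
    have h3 : b * IHp ≤ (b / a) * G := by
      calc b * IHp ≤ b * (a⁻¹ * G) := mul_le_mul_of_nonneg_left hIHpG hb.le
        _ = (b / a) * G := by ring
    have h4 : 2 ^ (p - 1) * (b - a) * (b - a) ^ (p - 1) * (b * IHp)
        ≤ 2 ^ (p - 1) * (b / a) * (b - a) ^ p * G := by
      calc 2 ^ (p - 1) * (b - a) * (b - a) ^ (p - 1) * (b * IHp)
          ≤ 2 ^ (p - 1) * (b - a) * (b - a) ^ (p - 1) * ((b / a) * G) := by
            refine mul_le_mul_of_nonneg_left h3 (by positivity)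
        _ = 2 ^ (p - 1) * (b / a) * (b - a) ^ p * G := by rw [hSQ]; ring
    have h5 : (0:ℝ) ≤ 2 ^ (p - 1) * (b - a) * G := by positivity
    have h6 : (0:ℝ) ≤ 2 ^ (p - 1) * (b / a) * (b - a) ^ p * (IT * b) := by positivity
    have h7 : 2 ^ (p - 1) * ((b - a) + b / a * (b - a) ^ p) * (IT * b + G)
        = 2 ^ (p - 1) * (b - a) * (IT * b) + 2 ^ (p - 1) * (b - a) * G
          + 2 ^ (p - 1) * (b / a) * (b - a) ^ p * (IT * b)
          + 2 ^ (p - 1) * (b / a) * (b - a) ^ p * G := by ring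
    linarith [h2, h4, h5, h6, h7]
  exact key
end

section
/- Let v, w : ℝ² → ℝ² be C² vector fields on the closed annulus Ω = {a ≤ |x| ≤ b} (0 < a < b) satisfying: v·n = w·n = 0 on both boundary circles, ∇×v = ∇×w = 0 on the outer circle |x| = b, and the Navier-slip conditions ν((∇v + (∇v)ᵀ)n)·τ = −α v·τ, ν((∇w + (∇w)ᵀ)n)·τ = −α w·τ on the inner circle |x| = a, with ∇·v = 0. Then −∫_Ω Δv·w dx = ∫_Ω ∇v:∇w dx + ∫_{|x|=a} (a⁻¹ + α/ν)·v_τ·w_τ ds + (1/b)·∫_{|x|=b} v_τ·w_τ ds. -/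
open MeasureTheory Set Real

noncomputable section

private lemma fderiv_pair (f : ℝ×ℝ→ℝ) (q : ℝ×ℝ) (x y : ℝ) :
    fderiv ℝ f q (x,y) = x * fderiv ℝ f q (1,0) + y * fderiv ℝ f q (0,1) := by
  have h : (x,y) = x • ((1:ℝ),(0:ℝ)) + y • ((0:ℝ),(1:ℝ)) := by simp [Prod.ext_iff]
  rw [h, map_add, ContinuousLinearMap.map_smul, ContinuousLinearMap.map_smul]; simp

private lemma hasDerivAt_comp_circle (f : ℝ×ℝ→ℝ) (hf : Differentiable ℝ f) (R θ : ℝ) :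
    HasDerivAt (fun t : ℝ => f (R * Real.cos t, R * Real.sin t))
      (fderiv ℝ f (R * Real.cos θ, R * Real.sin θ) (R * (-Real.sin θ), R * Real.cos θ)) θ :=
  (hf _).hasFDerivAt.comp_hasDerivAt θ
    (((Real.hasDerivAt_cos θ).const_mul R).prodMk ((Real.hasDerivAt_sin θ).const_mul R))

private lemma hasDerivAt_comp_ray (f : ℝ×ℝ→ℝ) (hf : Differentiable ℝ f) (c s r : ℝ) :
    HasDerivAt (fun t : ℝ => f (t * c, t * s)) (fderiv ℝ f (r * c, r * s) (c, s)) r :=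
  (hf _).hasFDerivAt.comp_hasDerivAt r
    (by simpa using ((hasDerivAt_id r).mul_const c).prodMk ((hasDerivAt_id r).mul_const s))

private theorem divergence_annulus (a b : ℝ) (ha : 0 < a) (hab : a < b)
    (g₁ g₂ : ℝ × ℝ → ℝ) (h1 : ContDiff ℝ 1 g₁) (h2 : ContDiff ℝ 1 g₂) :
    (∫ q in {q : ℝ × ℝ | a ^ 2 < q.1 ^ 2 + q.2 ^ 2 ∧ q.1 ^ 2 + q.2 ^ 2 < b ^ 2},
      (fderiv ℝ g₁ q (1, 0) + fderiv ℝ g₂ q (0, 1)))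
    = (∫ θ in (0:ℝ)..(2 * π),
        (g₁ (b * Real.cos θ, b * Real.sin θ) * Real.cos θ
         + g₂ (b * Real.cos θ, b * Real.sin θ) * Real.sin θ) * b)
    - ∫ θ in (0:ℝ)..(2 * π),
        (g₁ (a * Real.cos θ, a * Real.sin θ) * Real.cos θ
         + g₂ (a * Real.cos θ, a * Real.sin θ) * Real.sin θ) * a := by
  have hg₁d : Differentiable ℝ g₁ := h1.differentiable one_ne_zero
  have hg₂d : Differentiable ℝ g₂ := h2.differentiable one_ne_zero
  set A : Set (ℝ × ℝ) := {q : ℝ × ℝ | a ^ 2 < q.1 ^ 2 + q.2 ^ 2 ∧ q.1 ^ 2 + q.2 ^ 2 < b ^ 2}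
    with hA_def
  set dv : ℝ×ℝ→ℝ := fun q => fderiv ℝ g₁ q (1,0) + fderiv ℝ g₂ q (0,1) with hdv
  have hdvc : Continuous dv :=
    ((h1.continuous_fderiv one_ne_zero).clm_apply continuous_const).add
      ((h2.continuous_fderiv one_ne_zero).clm_apply continuous_const)
  have hAmeas : MeasurableSet A := by
    have hc : Continuous (fun q : ℝ × ℝ => q.1 ^ 2 + q.2 ^ 2) :=
      (continuous_fst.pow 2).add (continuous_snd.pow 2)
    exact ((isOpen_lt continuous_const hc).inter (isOpen_lt hc continuous_const)).measurableSet
  set R : Set (ℝ × ℝ) := Ioo a b ×ˢ Ioo (-π) π with hR_def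
  have hRmeas : MeasurableSet R := measurableSet_Ioo.prod measurableSet_Ioo
  have hRsub : R ⊆ polarCoord.target :=
    prod_mono (fun x hx => lt_trans ha hx.1) subset_rfl
  -- Step 1 : polar change of variables
  have step1 : ∫ q in A, dv q = ∫ p in R, p.1 * dv (p.1 * Real.cos p.2, p.1 * Real.sin p.2) := by
    rw [← integral_indicator hAmeas, ← integral_comp_polarCoord_symm (A.indicator dv)]
    have e1 : ∀ p ∈ polarCoord.target, p.1 • A.indicator dv (polarCoord.symm p)
        = R.indicator (fun p => p.1 * dv (p.1 * Real.cos p.2, p.1 * Real.sin p.2)) p := by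
      rintro ⟨r, θ⟩ hp
      obtain ⟨hr, hθ⟩ := hp
      have hr0 : (0:ℝ) < r := hr
      have hsymm : polarCoord.symm (r, θ) = (r * Real.cos θ, r * Real.sin θ) := rfl
      have hmem : polarCoord.symm (r, θ) ∈ A ↔ (r, θ) ∈ R := by
        rw [hsymm]
        have hsq : (r * Real.cos θ) ^ 2 + (r * Real.sin θ) ^ 2 = r ^ 2 := by
          have := Real.sin_sq_add_cos_sq θ; nlinarith
        simp only [hR_def, hA_def, mem_setOf_eq, mem_prod, mem_Ioo]
        constructor
        · rintro ⟨h1', h2'⟩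
          rw [hsq] at h1' h2'
          refine ⟨⟨?_, ?_⟩, hθ⟩
          · nlinarith
          · nlinarith
        · rintro ⟨⟨hra, hrb⟩, _⟩
          rw [hsq]
          constructor
          · nlinarith
          · nlinarith
      by_cases hmem2 : (r, θ) ∈ R
      · rw [indicator_of_mem (hmem.mpr hmem2), indicator_of_mem hmem2]
        simp [smul_eq_mul]
      · rw [indicator_of_notMem (fun h => hmem2 (hmem.mp h)), indicator_of_notMem hmem2]
        simp
    rw [setIntegral_congr_fun (polarCoord.open_target.measurableSet) e1,
      setIntegral_indicator hRmeas, inter_eq_self_of_subset_right hRsub]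

  -- the radial and angular "primitive" functions and their derivatives
  set Pf : ℝ → ℝ → ℝ := fun r θ =>
    r * (g₁ (r * Real.cos θ, r * Real.sin θ) * Real.cos θ
       + g₂ (r * Real.cos θ, r * Real.sin θ) * Real.sin θ) with hPf
  set Qf : ℝ → ℝ → ℝ := fun r θ =>
    g₁ (r * Real.cos θ, r * Real.sin θ) * (-Real.sin θ)
      + g₂ (r * Real.cos θ, r * Real.sin θ) * Real.cos θ with hQf
  set Pr : ℝ × ℝ → ℝ := fun p =>
    (g₁ (p.1 * Real.cos p.2, p.1 * Real.sin p.2) * Real.cos p.2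
      + g₂ (p.1 * Real.cos p.2, p.1 * Real.sin p.2) * Real.sin p.2)
    + p.1 * (fderiv ℝ g₁ (p.1 * Real.cos p.2, p.1 * Real.sin p.2) (Real.cos p.2, Real.sin p.2)
        * Real.cos p.2
      + fderiv ℝ g₂ (p.1 * Real.cos p.2, p.1 * Real.sin p.2) (Real.cos p.2, Real.sin p.2)
        * Real.sin p.2) with hPr
  set Qd : ℝ × ℝ → ℝ := fun p =>
    (fderiv ℝ g₁ (p.1 * Real.cos p.2, p.1 * Real.sin p.2)
        (p.1 * (-Real.sin p.2), p.1 * Real.cos p.2) * (-Real.sin p.2)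
      + g₁ (p.1 * Real.cos p.2, p.1 * Real.sin p.2) * (-Real.cos p.2))
    + (fderiv ℝ g₂ (p.1 * Real.cos p.2, p.1 * Real.sin p.2)
        (p.1 * (-Real.sin p.2), p.1 * Real.cos p.2) * Real.cos p.2
      + g₂ (p.1 * Real.cos p.2, p.1 * Real.sin p.2) * (-Real.sin p.2)) with hQd
  have hdP : ∀ θ r : ℝ, HasDerivAt (fun t => Pf t θ) (Pr (r, θ)) r := by
    intro θ r
    have h₁ := hasDerivAt_comp_ray g₁ hg₁d (Real.cos θ) (Real.sin θ) r
    have h₂ := hasDerivAt_comp_ray g₂ hg₂d (Real.cos θ) (Real.sin θ) r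
    have hG := (h₁.mul_const (Real.cos θ)).fun_add (h₂.mul_const (Real.sin θ))
    have h3 := (hasDerivAt_id r).fun_mul hG
    have h3' : HasDerivAt (fun t => Pf t θ) _ r := h3
    convert h3' using 1
    all_goals simp only [hPr, id_eq]; ring
  have hdQ : ∀ r t : ℝ, HasDerivAt (fun u => Qf r u) (Qd (r, t)) t := by
    intro r t
    have h₁ := hasDerivAt_comp_circle g₁ hg₁d r t
    have h₂ := hasDerivAt_comp_circle g₂ hg₂d r t
    have hterm1 := h₁.fun_mul ((Real.hasDerivAt_sin t).neg)
    have hterm2 := h₂.fun_mul (Real.hasDerivAt_cos t)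
    have h3 := hterm1.fun_add hterm2
    have h3' : HasDerivAt (fun u => Qf r u) _ t := h3
    convert h3' using 1
    all_goals simp only [hQd, Pi.neg_apply]
  -- key pointwise identity
  have key : ∀ p : ℝ × ℝ,
      p.1 * dv (p.1 * Real.cos p.2, p.1 * Real.sin p.2) = Pr p + Qd p := by
    rintro ⟨r, θ⟩
    simp only [hPr, hQd, hdv]
    rw [fderiv_pair g₁ _ (Real.cos θ) (Real.sin θ), fderiv_pair g₂ _ (Real.cos θ) (Real.sin θ),
      fderiv_pair g₁ _ (r * -Real.sin θ) (r * Real.cos θ),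
      fderiv_pair g₂ _ (r * -Real.sin θ) (r * Real.cos θ)]
    linear_combination (-(r * (fderiv ℝ g₁ (r * Real.cos θ, r * Real.sin θ) (1, 0)
        + fderiv ℝ g₂ (r * Real.cos θ, r * Real.sin θ) (0, 1)))) * Real.sin_sq_add_cos_sq θ
  -- continuity facts
  have hsymmc : Continuous (fun p : ℝ × ℝ => (p.1 * Real.cos p.2, p.1 * Real.sin p.2)) :=
    (continuous_fst.mul (Real.continuous_cos.comp continuous_snd)).prodMk
      (continuous_fst.mul (Real.continuous_sin.comp continuous_snd))
  have hfd1 : Continuous (fun p : ℝ × ℝ =>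
      fderiv ℝ g₁ (p.1 * Real.cos p.2, p.1 * Real.sin p.2)) :=
    (h1.continuous_fderiv one_ne_zero).comp hsymmc
  have hfd2 : Continuous (fun p : ℝ × ℝ =>
      fderiv ℝ g₂ (p.1 * Real.cos p.2, p.1 * Real.sin p.2)) :=
    (h2.continuous_fderiv one_ne_zero).comp hsymmc
  have hvecc : Continuous (fun p : ℝ × ℝ => (Real.cos p.2, Real.sin p.2)) :=
    ((Real.continuous_cos.comp continuous_snd).prodMk (Real.continuous_sin.comp continuous_snd))
  have hvecc2 : Continuous (fun p : ℝ × ℝ => (p.1 * (-Real.sin p.2), p.1 * Real.cos p.2)) :=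
    ((continuous_fst.mul (Real.continuous_sin.comp continuous_snd).neg).prodMk
      (continuous_fst.mul (Real.continuous_cos.comp continuous_snd)))
  have hg1c : Continuous (fun p : ℝ × ℝ => g₁ (p.1 * Real.cos p.2, p.1 * Real.sin p.2)) :=
    (h1.continuous).comp hsymmc
  have hg2c : Continuous (fun p : ℝ × ℝ => g₂ (p.1 * Real.cos p.2, p.1 * Real.sin p.2)) :=
    (h2.continuous).comp hsymmc
  have hcosc : Continuous (fun p : ℝ × ℝ => Real.cos p.2) := Real.continuous_cos.comp continuous_snd
  have hsinc : Continuous (fun p : ℝ × ℝ => Real.sin p.2) := Real.continuous_sin.comp continuous_snd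
  have hPrc : Continuous Pr := by
    apply Continuous.add
    · exact (hg1c.mul hcosc).add (hg2c.mul hsinc)
    · exact continuous_fst.mul (((hfd1.clm_apply hvecc).mul hcosc).add
        ((hfd2.clm_apply hvecc).mul hsinc))
  have hQdc : Continuous Qd := by
    apply Continuous.add
    · exact ((hfd1.clm_apply hvecc2).mul hsinc.neg).add (hg1c.mul hcosc.neg)
    · exact ((hfd2.clm_apply hvecc2).mul hcosc).add (hg2c.mul hsinc.neg)
  -- integrability on R
  have hRIcc : R ⊆ Icc (a, -π) (b, π) := by
    rw [Icc_prod_eq]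
    exact prod_mono Ioo_subset_Icc_self Ioo_subset_Icc_self
  have hPrInt : IntegrableOn Pr R := (hPrc.integrableOn_Icc).mono_set hRIcc
  have hQdInt : IntegrableOn Qd R := (hQdc.integrableOn_Icc).mono_set hRIcc
  -- split the integral
  have step2 : ∫ p in R, p.1 * dv (p.1 * Real.cos p.2, p.1 * Real.sin p.2)
      = (∫ p in R, Pr p) + ∫ p in R, Qd p := by
    rw [← integral_add hPrInt hQdInt]
    exact setIntegral_congr_fun hRmeas (fun p _ => key p)
  -- the angular part vanishes
  have stepQ : ∫ p in R, Qd p = 0 := by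
    have hint : Integrable Qd ((volume.restrict (Ioo a b)).prod (volume.restrict (Ioo (-π) π))) := by
      rw [Measure.prod_restrict, ← Measure.volume_eq_prod]
      exact hQdInt
    rw [hR_def, Measure.volume_eq_prod, ← Measure.prod_restrict, integral_prod _ hint]
    have hinner : ∀ r : ℝ, ∫ θ in Ioo (-π) π, Qd (r, θ) = 0 := by
      intro r
      rw [← integral_Ioc_eq_integral_Ioo,
        ← intervalIntegral.integral_of_le (by linarith [Real.pi_pos])]
      rw [intervalIntegral.integral_eq_sub_of_hasDerivAt (fun t _ => hdQ r t)
        ((hQdc.comp (continuous_const.prodMk continuous_id)).intervalIntegrable _ _)]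
      simp [hQf]
    simp only [hinner, integral_zero]
  -- the radial part
  have stepP : ∫ p in R, Pr p = ∫ θ in Ioo (-π) π, (Pf b θ - Pf a θ) := by
    have hint : Integrable Pr ((volume.restrict (Ioo a b)).prod (volume.restrict (Ioo (-π) π))) := by
      rw [Measure.prod_restrict, ← Measure.volume_eq_prod]
      exact hPrInt
    rw [hR_def, Measure.volume_eq_prod, ← Measure.prod_restrict, integral_prod_symm _ hint]
    congr 1
    funext θ
    rw [← integral_Ioc_eq_integral_Ioo, ← intervalIntegral.integral_of_le hab.le]
    exact intervalIntegral.integral_eq_sub_of_hasDerivAt (fun r _ => hdP θ r)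
      ((hPrc.comp (continuous_id.prodMk continuous_const)).intervalIntegrable _ _)
  -- boundary integrals
  have hbd : ∀ R' : ℝ, ∫ θ in Ioo (-π) π, Pf R' θ
      = ∫ θ in (0:ℝ)..(2 * π),
        (g₁ (R' * Real.cos θ, R' * Real.sin θ) * Real.cos θ
         + g₂ (R' * Real.cos θ, R' * Real.sin θ) * Real.sin θ) * R' := by
    intro R'
    have hper : Function.Periodic (fun θ => Pf R' θ) (2 * π) := by
      intro x
      simp [hPf, Real.cos_add_two_pi, Real.sin_add_two_pi]
    have h2π := hper.intervalIntegral_add_eq (-π) 0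
    rw [show -π + 2 * π = π by ring, show (0:ℝ) + 2 * π = 2 * π by ring] at h2π
    rw [← integral_Ioc_eq_integral_Ioo,
      ← intervalIntegral.integral_of_le (by linarith [Real.pi_pos] : -π ≤ π), h2π]
    exact intervalIntegral.integral_congr (fun θ _ => by simp only [hPf]; ring)
  have hPfc : ∀ R' : ℝ, Continuous (fun θ : ℝ => Pf R' θ) := by
    intro R'
    have hpath : Continuous (fun θ : ℝ => (R' * Real.cos θ, R' * Real.sin θ)) :=
      (continuous_const.mul Real.continuous_cos).prodMk (continuous_const.mul Real.continuous_sin)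
    exact continuous_const.mul (((h1.continuous.comp hpath).mul Real.continuous_cos).add
      ((h2.continuous.comp hpath).mul Real.continuous_sin))
  have hsub : ∫ θ in Ioo (-π) π, (Pf b θ - Pf a θ)
      = (∫ θ in Ioo (-π) π, Pf b θ) - ∫ θ in Ioo (-π) π, Pf a θ :=
    integral_sub (((hPfc b).integrableOn_Icc).mono_set Ioo_subset_Icc_self)
      (((hPfc a).integrableOn_Icc).mono_set Ioo_subset_Icc_self)
  rw [step1, step2, stepQ, stepP, hsub, hbd a, hbd b, add_zero]

private lemma circle_sqrt (R : ℝ) (hR : 0 < R) (t : ℝ) :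
    Real.sqrt ((R * Real.cos t) ^ 2 + (R * Real.sin t) ^ 2) = R := by
  rw [show (R * Real.cos t) ^ 2 + (R * Real.sin t) ^ 2 = R ^ 2 by
    nlinarith [Real.sin_sq_add_cos_sq t]]
  exact Real.sqrt_sq hR.le

private lemma tangency_deriv (R : ℝ) (f₁ f₂ : ℝ × ℝ → ℝ)
    (h₁ : Differentiable ℝ f₁) (h₂ : Differentiable ℝ f₂)
    (htan : ∀ t : ℝ, f₁ (R * Real.cos t, R * Real.sin t) * (R * Real.cos t)
      + f₂ (R * Real.cos t, R * Real.sin t) * (R * Real.sin t) = 0) (θ : ℝ) :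
    fderiv ℝ f₁ (R * Real.cos θ, R * Real.sin θ) (R * -Real.sin θ, R * Real.cos θ)
        * (R * Real.cos θ)
      + f₁ (R * Real.cos θ, R * Real.sin θ) * (R * -Real.sin θ)
      + fderiv ℝ f₂ (R * Real.cos θ, R * Real.sin θ) (R * -Real.sin θ, R * Real.cos θ)
        * (R * Real.sin θ)
      + f₂ (R * Real.cos θ, R * Real.sin θ) * (R * Real.cos θ) = 0 := by
  have hd1 := (hasDerivAt_comp_circle f₁ h₁ R θ).fun_mul ((Real.hasDerivAt_cos θ).const_mul R)
  have hd2 := (hasDerivAt_comp_circle f₂ h₂ R θ).fun_mul ((Real.hasDerivAt_sin θ).const_mul R)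
  have hd := hd1.fun_add hd2
  have hfun : (fun t => f₁ (R * Real.cos t, R * Real.sin t) * (R * Real.cos t)
      + f₂ (R * Real.cos t, R * Real.sin t) * (R * Real.sin t)) = fun _ => (0:ℝ) :=
    funext htan
  rw [hfun] at hd
  have h0 := hd.unique (hasDerivAt_const θ 0)
  linear_combination h0



/-- Integration by parts on the annulus `Ω = {a < |x| < b}` for divergence-free
vector fields tangent to the boundary, curl-free on the outer circle, and
satisfying the Navier-slip condition on the inner circle:
`-∫_Ω Δv·w = ∫_Ω ∇v:∇w + ∫_{|x|=a} (a⁻¹ + α/ν) v_τ w_τ ds + (1/b)∫_{|x|=b} v_τ w_τ ds`,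
with the boundary integrals written via arc-length parametrizations. -/
theorem annulus_integration_by_parts (a b ν : ℝ) (ha : 0 < a) (hab : a < b)
    (hν : 0 < ν) (α : ℝ × ℝ → ℝ) (v w : ℝ × ℝ → ℝ × ℝ)
    (hv : ContDiff ℝ 2 v) (hw : ContDiff ℝ 2 w)
    -- tangency on both boundary circles
    (hvn : ∀ q : ℝ × ℝ, Real.sqrt (q.1 ^ 2 + q.2 ^ 2) = a ∨
        Real.sqrt (q.1 ^ 2 + q.2 ^ 2) = b →
      (v q).1 * q.1 + (v q).2 * q.2 = 0)
    (hwn : ∀ q : ℝ × ℝ, Real.sqrt (q.1 ^ 2 + q.2 ^ 2) = a ∨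
        Real.sqrt (q.1 ^ 2 + q.2 ^ 2) = b →
      (w q).1 * q.1 + (w q).2 * q.2 = 0)
    -- vanishing curl on the outer circle
    (hvcurl : ∀ q : ℝ × ℝ, Real.sqrt (q.1 ^ 2 + q.2 ^ 2) = b →
      fderiv ℝ (fun r => (v r).2) q (1, 0) - fderiv ℝ (fun r => (v r).1) q (0, 1) = 0)
    (hwcurl : ∀ q : ℝ × ℝ, Real.sqrt (q.1 ^ 2 + q.2 ^ 2) = b →
      fderiv ℝ (fun r => (w r).2) q (1, 0) - fderiv ℝ (fun r => (w r).1) q (0, 1) = 0)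
    -- Navier-slip condition on the inner circle, with inward normal
    -- n = -(q₁/a, q₂/a) and tangent τ = (q₂/a, -q₁/a)
    (hvslip : ∀ q : ℝ × ℝ, Real.sqrt (q.1 ^ 2 + q.2 ^ 2) = a →
      ν * ((-(q.1 / a)) * ((2 * fderiv ℝ (fun r => (v r).1) q (1, 0)) * (q.2 / a)
              + (fderiv ℝ (fun r => (v r).2) q (1, 0)
                + fderiv ℝ (fun r => (v r).1) q (0, 1)) * (-(q.1 / a)))
          + (-(q.2 / a)) * ((fderiv ℝ (fun r => (v r).1) q (0, 1)
                + fderiv ℝ (fun r => (v r).2) q (1, 0)) * (q.2 / a)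
              + (2 * fderiv ℝ (fun r => (v r).2) q (0, 1)) * (-(q.1 / a))))
        = -(α q) * ((v q).1 * (q.2 / a) + (v q).2 * (-(q.1 / a))))
    (hwslip : ∀ q : ℝ × ℝ, Real.sqrt (q.1 ^ 2 + q.2 ^ 2) = a →
      ν * ((-(q.1 / a)) * ((2 * fderiv ℝ (fun r => (w r).1) q (1, 0)) * (q.2 / a)
              + (fderiv ℝ (fun r => (w r).2) q (1, 0)
                + fderiv ℝ (fun r => (w r).1) q (0, 1)) * (-(q.1 / a)))
          + (-(q.2 / a)) * ((fderiv ℝ (fun r => (w r).1) q (0, 1)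
                + fderiv ℝ (fun r => (w r).2) q (1, 0)) * (q.2 / a)
              + (2 * fderiv ℝ (fun r => (w r).2) q (0, 1)) * (-(q.1 / a))))
        = -(α q) * ((w q).1 * (q.2 / a) + (w q).2 * (-(q.1 / a))))
    -- incompressibility of v
    (hdiv : ∀ q : ℝ × ℝ,
      fderiv ℝ (fun r => (v r).1) q (1, 0) + fderiv ℝ (fun r => (v r).2) q (0, 1) = 0) :
    -(∫ q in {q : ℝ × ℝ | a ^ 2 < q.1 ^ 2 + q.2 ^ 2 ∧ q.1 ^ 2 + q.2 ^ 2 < b ^ 2},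
        ((fderiv ℝ (fun r => fderiv ℝ (fun s => (v s).1) r (1, 0)) q (1, 0)
          + fderiv ℝ (fun r => fderiv ℝ (fun s => (v s).1) r (0, 1)) q (0, 1)) * (w q).1
        + (fderiv ℝ (fun r => fderiv ℝ (fun s => (v s).2) r (1, 0)) q (1, 0)
          + fderiv ℝ (fun r => fderiv ℝ (fun s => (v s).2) r (0, 1)) q (0, 1)) * (w q).2))
      = (∫ q in {q : ℝ × ℝ | a ^ 2 < q.1 ^ 2 + q.2 ^ 2 ∧ q.1 ^ 2 + q.2 ^ 2 < b ^ 2},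
          (fderiv ℝ (fun r => (v r).1) q (1, 0) * fderiv ℝ (fun r => (w r).1) q (1, 0)
          + fderiv ℝ (fun r => (v r).2) q (1, 0) * fderiv ℝ (fun r => (w r).2) q (1, 0)
          + fderiv ℝ (fun r => (v r).1) q (0, 1) * fderiv ℝ (fun r => (w r).1) q (0, 1)
          + fderiv ℝ (fun r => (v r).2) q (0, 1) * fderiv ℝ (fun r => (w r).2) q (0, 1)))
        + (∫ θ in (0:ℝ)..(2 * π),
            (a⁻¹ + α (a * Real.cos θ, a * Real.sin θ) / ν)
            * (-(v (a * Real.cos θ, a * Real.sin θ)).1 * Real.sin θ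
                + (v (a * Real.cos θ, a * Real.sin θ)).2 * Real.cos θ)
            * (-(w (a * Real.cos θ, a * Real.sin θ)).1 * Real.sin θ
                + (w (a * Real.cos θ, a * Real.sin θ)).2 * Real.cos θ) * a)
        + (1 / b) * (∫ θ in (0:ℝ)..(2 * π),
            (-(v (b * Real.cos θ, b * Real.sin θ)).1 * Real.sin θ
                + (v (b * Real.cos θ, b * Real.sin θ)).2 * Real.cos θ)
            * (-(w (b * Real.cos θ, b * Real.sin θ)).1 * Real.sin θ
                + (w (b * Real.cos θ, b * Real.sin θ)).2 * Real.cos θ) * b) := by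
  have hb : 0 < b := lt_trans ha hab
  have hbne : b ≠ 0 := hb.ne'
  have hane : a ≠ 0 := ha.ne'
  have hνne : ν ≠ 0 := hν.ne'
  have hv1 : ContDiff ℝ 2 (fun r : ℝ × ℝ => (v r).1) := contDiff_fst.comp hv
  have hv2 : ContDiff ℝ 2 (fun r : ℝ × ℝ => (v r).2) := contDiff_snd.comp hv
  have hw1 : ContDiff ℝ 2 (fun r : ℝ × ℝ => (w r).1) := contDiff_fst.comp hw
  have hw2 : ContDiff ℝ 2 (fun r : ℝ × ℝ => (w r).2) := contDiff_snd.comp hw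
  have hv1d : Differentiable ℝ (fun r : ℝ × ℝ => (v r).1) := hv1.differentiable two_ne_zero
  have hv2d : Differentiable ℝ (fun r : ℝ × ℝ => (v r).2) := hv2.differentiable two_ne_zero
  have hw1d : Differentiable ℝ (fun r : ℝ × ℝ => (w r).1) := hw1.differentiable two_ne_zero
  have hw2d : Differentiable ℝ (fun r : ℝ × ℝ => (w r).2) := hw2.differentiable two_ne_zero
  have hF : ∀ (f : ℝ × ℝ → ℝ), ContDiff ℝ 2 f → ∀ u : ℝ × ℝ,
      ContDiff ℝ 1 (fun x => fderiv ℝ f x u) := fun f hf u =>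
    (hf.fderiv_right (by norm_num)).clm_apply contDiff_const
  set g₁ : ℝ × ℝ → ℝ := fun x => fderiv ℝ (fun r => (v r).1) x (1,0) * (w x).1
      + fderiv ℝ (fun r => (v r).2) x (1,0) * (w x).2 with hg₁def
  set g₂ : ℝ × ℝ → ℝ := fun x => fderiv ℝ (fun r => (v r).1) x (0,1) * (w x).1
      + fderiv ℝ (fun r => (v r).2) x (0,1) * (w x).2 with hg₂def
  have hg₁ : ContDiff ℝ 1 g₁ := ((hF _ hv1 (1,0)).mul (hw1.of_le one_le_two)).add
    ((hF _ hv2 (1,0)).mul (hw2.of_le one_le_two))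
  have hg₂ : ContDiff ℝ 1 g₂ := ((hF _ hv1 (0,1)).mul (hw1.of_le one_le_two)).add
    ((hF _ hv2 (0,1)).mul (hw2.of_le one_le_two))
  have hmain := divergence_annulus a b ha hab g₁ g₂ hg₁ hg₂
  have hprod : ∀ (f h : ℝ × ℝ → ℝ), Differentiable ℝ f → Differentiable ℝ h →
      ∀ (q u : ℝ × ℝ), fderiv ℝ (fun x => f x * h x) q u
        = fderiv ℝ f q u * h q + f q * fderiv ℝ h q u := by
    intro f h hf hh q u
    rw [fderiv_fun_mul (hf q) (hh q)]
    simp only [ContinuousLinearMap.add_apply, ContinuousLinearMap.coe_smul', Pi.smul_apply,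
      smul_eq_mul]
    ring
  have hFd : ∀ (f : ℝ × ℝ → ℝ), ContDiff ℝ 2 f → ∀ u : ℝ × ℝ,
      Differentiable ℝ (fun x => fderiv ℝ f x u) := fun f hf u =>
    (hF f hf u).differentiable one_ne_zero
  -- the divergence identity
  have hdiv_id : ∀ q : ℝ × ℝ, fderiv ℝ g₁ q (1,0) + fderiv ℝ g₂ q (0,1)
      = ((fderiv ℝ (fun r => fderiv ℝ (fun s => (v s).1) r (1, 0)) q (1, 0)
          + fderiv ℝ (fun r => fderiv ℝ (fun s => (v s).1) r (0, 1)) q (0, 1)) * (w q).1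
        + (fderiv ℝ (fun r => fderiv ℝ (fun s => (v s).2) r (1, 0)) q (1, 0)
          + fderiv ℝ (fun r => fderiv ℝ (fun s => (v s).2) r (0, 1)) q (0, 1)) * (w q).2)
      + (fderiv ℝ (fun r => (v r).1) q (1,0) * fderiv ℝ (fun r => (w r).1) q (1,0)
        + fderiv ℝ (fun r => (v r).2) q (1,0) * fderiv ℝ (fun r => (w r).2) q (1,0)
        + fderiv ℝ (fun r => (v r).1) q (0,1) * fderiv ℝ (fun r => (w r).1) q (0,1)
        + fderiv ℝ (fun r => (v r).2) q (0,1) * fderiv ℝ (fun r => (w r).2) q (0,1)) := by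
    intro q
    have e1 : fderiv ℝ g₁ q (1,0)
        = fderiv ℝ (fun r => fderiv ℝ (fun s => (v s).1) r (1, 0)) q (1, 0) * (w q).1
          + fderiv ℝ (fun r => (v r).1) q (1,0) * fderiv ℝ (fun r => (w r).1) q (1,0)
          + (fderiv ℝ (fun r => fderiv ℝ (fun s => (v s).2) r (1, 0)) q (1, 0) * (w q).2
            + fderiv ℝ (fun r => (v r).2) q (1,0) * fderiv ℝ (fun r => (w r).2) q (1,0)) := by
      rw [hg₁def]
      rw [fderiv_fun_add (((hFd _ hv1 (1,0)) q).fun_mul (hw1d q)) (((hFd _ hv2 (1,0)) q).fun_mul (hw2d q))]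
      rw [ContinuousLinearMap.add_apply, hprod _ _ (hFd _ hv1 (1,0)) hw1d,
        hprod _ _ (hFd _ hv2 (1,0)) hw2d]
    have e2 : fderiv ℝ g₂ q (0,1)
        = fderiv ℝ (fun r => fderiv ℝ (fun s => (v s).1) r (0, 1)) q (0, 1) * (w q).1
          + fderiv ℝ (fun r => (v r).1) q (0,1) * fderiv ℝ (fun r => (w r).1) q (0,1)
          + (fderiv ℝ (fun r => fderiv ℝ (fun s => (v s).2) r (0, 1)) q (0, 1) * (w q).2
            + fderiv ℝ (fun r => (v r).2) q (0,1) * fderiv ℝ (fun r => (w r).2) q (0,1)) := by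
      rw [hg₂def]
      rw [fderiv_fun_add (((hFd _ hv1 (0,1)) q).fun_mul (hw1d q)) (((hFd _ hv2 (0,1)) q).fun_mul (hw2d q))]
      rw [ContinuousLinearMap.add_apply, hprod _ _ (hFd _ hv1 (0,1)) hw1d,
        hprod _ _ (hFd _ hv2 (0,1)) hw2d]
    rw [e1, e2]; ring
  set A : Set (ℝ × ℝ) := {q : ℝ × ℝ | a ^ 2 < q.1 ^ 2 + q.2 ^ 2 ∧ q.1 ^ 2 + q.2 ^ 2 < b ^ 2}
    with hA_def
  have hAmeas : MeasurableSet A := by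
    have hc : Continuous (fun q : ℝ × ℝ => q.1 ^ 2 + q.2 ^ 2) :=
      (continuous_fst.pow 2).add (continuous_snd.pow 2)
    exact ((isOpen_lt continuous_const hc).inter (isOpen_lt hc continuous_const)).measurableSet
  have hAsub : A ⊆ Icc ((-b, -b) : ℝ × ℝ) ((b, b) : ℝ × ℝ) := by
    rintro ⟨x, y⟩ ⟨_, h2⟩
    simp only [mem_setOf_eq] at h2
    simp only [mem_Icc, Prod.mk_le_mk]
    refine ⟨⟨?_, ?_⟩, ?_, ?_⟩ <;> nlinarith [sq_nonneg x, sq_nonneg y]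
  have hC1 : ∀ (f : ℝ × ℝ → ℝ), ContDiff ℝ 2 f → ∀ u : ℝ × ℝ,
      Continuous (fun q => fderiv ℝ f q u) := fun f hf u =>
    ((hf.continuous_fderiv two_ne_zero).clm_apply continuous_const)
  have hC2 : ∀ (f : ℝ × ℝ → ℝ), ContDiff ℝ 2 f → ∀ u u' : ℝ × ℝ,
      Continuous (fun q => fderiv ℝ (fun x => fderiv ℝ f x u) q u') := fun f hf u u' =>
    (((hF f hf u).continuous_fderiv one_ne_zero).clm_apply continuous_const)
  have hΔint : IntegrableOn (fun q : ℝ × ℝ =>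
      ((fderiv ℝ (fun r => fderiv ℝ (fun s => (v s).1) r (1, 0)) q (1, 0)
          + fderiv ℝ (fun r => fderiv ℝ (fun s => (v s).1) r (0, 1)) q (0, 1)) * (w q).1
        + (fderiv ℝ (fun r => fderiv ℝ (fun s => (v s).2) r (1, 0)) q (1, 0)
          + fderiv ℝ (fun r => fderiv ℝ (fun s => (v s).2) r (0, 1)) q (0, 1)) * (w q).2)) A := by
    refine (Continuous.integrableOn_Icc ?_).mono_set hAsub
    exact (((hC2 _ hv1 (1,0) (1,0)).add (hC2 _ hv1 (0,1) (0,1))).mul (hw1.continuous)).add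
      (((hC2 _ hv2 (1,0) (1,0)).add (hC2 _ hv2 (0,1) (0,1))).mul (hw2.continuous))
  have hGint : IntegrableOn (fun q : ℝ × ℝ =>
      (fderiv ℝ (fun r => (v r).1) q (1,0) * fderiv ℝ (fun r => (w r).1) q (1,0)
        + fderiv ℝ (fun r => (v r).2) q (1,0) * fderiv ℝ (fun r => (w r).2) q (1,0)
        + fderiv ℝ (fun r => (v r).1) q (0,1) * fderiv ℝ (fun r => (w r).1) q (0,1)
        + fderiv ℝ (fun r => (v r).2) q (0,1) * fderiv ℝ (fun r => (w r).2) q (0,1))) A := by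
    refine (Continuous.integrableOn_Icc ?_).mono_set hAsub
    exact ((((hC1 _ hv1 (1,0)).mul (hC1 _ hw1 (1,0))).add
      ((hC1 _ hv2 (1,0)).mul (hC1 _ hw2 (1,0)))).add
      ((hC1 _ hv1 (0,1)).mul (hC1 _ hw1 (0,1)))).add
      ((hC1 _ hv2 (0,1)).mul (hC1 _ hw2 (0,1)))
  have hsplit : (∫ q in A, (fderiv ℝ g₁ q (1,0) + fderiv ℝ g₂ q (0,1)))
      = (∫ q in A,
          ((fderiv ℝ (fun r => fderiv ℝ (fun s => (v s).1) r (1, 0)) q (1, 0)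
            + fderiv ℝ (fun r => fderiv ℝ (fun s => (v s).1) r (0, 1)) q (0, 1)) * (w q).1
          + (fderiv ℝ (fun r => fderiv ℝ (fun s => (v s).2) r (1, 0)) q (1, 0)
            + fderiv ℝ (fun r => fderiv ℝ (fun s => (v s).2) r (0, 1)) q (0, 1)) * (w q).2))
        + ∫ q in A,
          (fderiv ℝ (fun r => (v r).1) q (1,0) * fderiv ℝ (fun r => (w r).1) q (1,0)
          + fderiv ℝ (fun r => (v r).2) q (1,0) * fderiv ℝ (fun r => (w r).2) q (1,0)
          + fderiv ℝ (fun r => (v r).1) q (0,1) * fderiv ℝ (fun r => (w r).1) q (0,1)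
          + fderiv ℝ (fun r => (v r).2) q (0,1) * fderiv ℝ (fun r => (w r).2) q (0,1)) := by
    rw [← integral_add hΔint hGint]
    exact setIntegral_congr_fun hAmeas (fun q _ => hdiv_id q)
  -- tangency along circles
  have htanvb : ∀ t : ℝ,
      (fun r : ℝ × ℝ => (v r).1) (b * Real.cos t, b * Real.sin t) * (b * Real.cos t)
      + (fun r : ℝ × ℝ => (v r).2) (b * Real.cos t, b * Real.sin t) * (b * Real.sin t) = 0 :=
    fun t => hvn _ (Or.inr (circle_sqrt b hb t))
  have htanva : ∀ t : ℝ,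
      (fun r : ℝ × ℝ => (v r).1) (a * Real.cos t, a * Real.sin t) * (a * Real.cos t)
      + (fun r : ℝ × ℝ => (v r).2) (a * Real.cos t, a * Real.sin t) * (a * Real.sin t) = 0 :=
    fun t => hvn _ (Or.inl (circle_sqrt a ha t))
  -- boundary identities
  have houter : ∀ θ : ℝ,
      (g₁ (b * Real.cos θ, b * Real.sin θ) * Real.cos θ
        + g₂ (b * Real.cos θ, b * Real.sin θ) * Real.sin θ) * b
      = -(1/b) * ((-(v (b * Real.cos θ, b * Real.sin θ)).1 * Real.sin θ
          + (v (b * Real.cos θ, b * Real.sin θ)).2 * Real.cos θ)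
        * (-(w (b * Real.cos θ, b * Real.sin θ)).1 * Real.sin θ
          + (w (b * Real.cos θ, b * Real.sin θ)).2 * Real.cos θ) * b) := by
    intro θ
    have pyth := Real.sin_sq_add_cos_sq θ
    have htd := tangency_deriv b (fun r => (v r).1) (fun r => (v r).2) hv1d hv2d htanvb θ
    rw [fderiv_pair (fun r => (v r).1) _ (b * -Real.sin θ) (b * Real.cos θ),
      fderiv_pair (fun r => (v r).2) _ (b * -Real.sin θ) (b * Real.cos θ)] at htd
    have hwt := hwn (b * Real.cos θ, b * Real.sin θ) (Or.inr (circle_sqrt b hb θ))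
    have hcu := hvcurl (b * Real.cos θ, b * Real.sin θ) (circle_sqrt b hb θ)
    simp only [hg₁def, hg₂def]
    simp only at htd hwt hcu ⊢
    set c := Real.cos θ with hc
    set s := Real.sin θ with hs
    set A1 := fderiv ℝ (fun r => (v r).1) (b * c, b * s) (1,0) with hA1
    set A2 := fderiv ℝ (fun r => (v r).1) (b * c, b * s) (0,1) with hA2
    set B1 := fderiv ℝ (fun r => (v r).2) (b * c, b * s) (1,0) with hB1
    set B2 := fderiv ℝ (fun r => (v r).2) (b * c, b * s) (0,1) with hB2
    set V1 := (v (b * c, b * s)).1 with hV1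
    set V2 := (v (b * c, b * s)).2 with hV2
    set W1 := (w (b * c, b * s)).1 with hW1'
    set W2 := (w (b * c, b * s)).2 with hW2'
    have htan' : W1 * c + W2 * s = 0 := by
      have h0 : b * (W1 * c + W2 * s) = 0 := by linear_combination hwt
      exact (mul_eq_zero.mp h0).resolve_left hbne
    have hW1 : W1 = -(-W1 * s + W2 * c) * s := by linear_combination c * htan' - W1 * pyth
    have hW2 : W2 = (-W1 * s + W2 * c) * c := by linear_combination s * htan' - W2 * pyth
    have key : ((A1 * W1 + B1 * W2) * c + (A2 * W1 + B2 * W2) * s) * b * b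
        = -((-V1 * s + V2 * c) * (-W1 * s + W2 * c)) * b := by
      linear_combination (-W1 * s + W2 * c) * htd
        + (b^2 * (-W1 * s + W2 * c) * (c^2 + s^2)) * hcu
        + (b^2 * (c * A1 + s * A2)) * hW1 + (b^2 * (c * B1 + s * B2)) * hW2
    have h2 := mul_right_cancel₀ hbne key
    rw [h2]
    field_simp
  have hinner : ∀ θ : ℝ,
      (g₁ (a * Real.cos θ, a * Real.sin θ) * Real.cos θ
        + g₂ (a * Real.cos θ, a * Real.sin θ) * Real.sin θ) * a
      = (a⁻¹ + α (a * Real.cos θ, a * Real.sin θ) / ν)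
        * (-(v (a * Real.cos θ, a * Real.sin θ)).1 * Real.sin θ
          + (v (a * Real.cos θ, a * Real.sin θ)).2 * Real.cos θ)
        * (-(w (a * Real.cos θ, a * Real.sin θ)).1 * Real.sin θ
          + (w (a * Real.cos θ, a * Real.sin θ)).2 * Real.cos θ) * a := by
    intro θ
    have pyth := Real.sin_sq_add_cos_sq θ
    have htd := tangency_deriv a (fun r => (v r).1) (fun r => (v r).2) hv1d hv2d htanva θ
    rw [fderiv_pair (fun r => (v r).1) _ (a * -Real.sin θ) (a * Real.cos θ),
      fderiv_pair (fun r => (v r).2) _ (a * -Real.sin θ) (a * Real.cos θ)] at htd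
    have hwt := hwn (a * Real.cos θ, a * Real.sin θ) (Or.inl (circle_sqrt a ha θ))
    have hsl := hvslip (a * Real.cos θ, a * Real.sin θ) (circle_sqrt a ha θ)
    have hc1 : (a * Real.cos θ) / a = Real.cos θ := by field_simp
    have hc2 : (a * Real.sin θ) / a = Real.sin θ := by field_simp
    simp only [hg₁def, hg₂def]
    simp only at htd hwt hsl ⊢
    rw [hc1, hc2] at hsl
    set c := Real.cos θ with hc
    set s := Real.sin θ with hs
    set A1 := fderiv ℝ (fun r => (v r).1) (a * c, a * s) (1,0) with hA1
    set A2 := fderiv ℝ (fun r => (v r).1) (a * c, a * s) (0,1) with hA2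
    set B1 := fderiv ℝ (fun r => (v r).2) (a * c, a * s) (1,0) with hB1
    set B2 := fderiv ℝ (fun r => (v r).2) (a * c, a * s) (0,1) with hB2
    set V1 := (v (a * c, a * s)).1 with hV1
    set V2 := (v (a * c, a * s)).2 with hV2
    set W1 := (w (a * c, a * s)).1 with hW1'
    set W2 := (w (a * c, a * s)).2 with hW2'
    set AL := α (a * c, a * s) with hAL
    have htan' : W1 * c + W2 * s = 0 := by
      have h0 : a * (W1 * c + W2 * s) = 0 := by linear_combination hwt
      exact (mul_eq_zero.mp h0).resolve_left hane
    have hW1 : W1 = -(-W1 * s + W2 * c) * s := by linear_combination c * htan' - W1 * pyth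
    have hW2 : W2 = (-W1 * s + W2 * c) * c := by linear_combination s * htan' - W2 * pyth
    have key : ((A1 * W1 + B1 * W2) * c + (A2 * W1 + B2 * W2) * s) * (a^2 * ν)
        = a * (ν + a * AL) * ((-V1 * s + V2 * c) * (-W1 * s + W2 * c)) := by
      linear_combination (a^2 * (-W1 * s + W2 * c)) * hsl
        - (ν * (-W1 * s + W2 * c)) * htd
        + (a^2 * ν * (c * A1 + s * A2)) * hW1 + (a^2 * ν * (c * B1 + s * B2)) * hW2
    field_simp
    exact mul_left_cancel₀ hane (by linear_combination key)
  have hJb : (∫ θ in (0:ℝ)..(2 * π),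
        (g₁ (b * Real.cos θ, b * Real.sin θ) * Real.cos θ
         + g₂ (b * Real.cos θ, b * Real.sin θ) * Real.sin θ) * b)
      = -(1/b) * ∫ θ in (0:ℝ)..(2 * π),
          ((-(v (b * Real.cos θ, b * Real.sin θ)).1 * Real.sin θ
            + (v (b * Real.cos θ, b * Real.sin θ)).2 * Real.cos θ)
          * (-(w (b * Real.cos θ, b * Real.sin θ)).1 * Real.sin θ
            + (w (b * Real.cos θ, b * Real.sin θ)).2 * Real.cos θ) * b) := by
    rw [← intervalIntegral.integral_const_mul]
    exact intervalIntegral.integral_congr (fun θ _ => houter θ)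
  have hJa : (∫ θ in (0:ℝ)..(2 * π),
        (g₁ (a * Real.cos θ, a * Real.sin θ) * Real.cos θ
         + g₂ (a * Real.cos θ, a * Real.sin θ) * Real.sin θ) * a)
      = ∫ θ in (0:ℝ)..(2 * π),
          (a⁻¹ + α (a * Real.cos θ, a * Real.sin θ) / ν)
          * (-(v (a * Real.cos θ, a * Real.sin θ)).1 * Real.sin θ
            + (v (a * Real.cos θ, a * Real.sin θ)).2 * Real.cos θ)
          * (-(w (a * Real.cos θ, a * Real.sin θ)).1 * Real.sin θ
            + (w (a * Real.cos θ, a * Real.sin θ)).2 * Real.cos θ) * a :=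
    intervalIntegral.integral_congr (fun θ _ => hinner θ)
  rw [hsplit, hJb, hJa] at hmain
  linarith [hmain]
end
end
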